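/- arXiv:1102.0842 — 8 statements merged into one kernel-verified Lean document; each statement's English description precedes it below -/
import Mathlib

section
/- For a > 0 define u_a(η) = exp(-a·η/(ln η)²) for η > 1. For every integer k ≥ 0 and every real t ≥ e⁴ such that a·t/(ln t)² ≥ 2k+2, one has ∫_t^∞ η^k u_a(η) dη ≤ ((2k+3)/a) · t^{2k+2} · u_a(t). -/
open MeasureTheory Real Filter Set

/-- `(log x)^2 ≤ x` for `x ≥ e⁴`. -/
lemma aux_sq_log_le {x : ℝ} (hx : Real.exp 4 ≤ x) : (Real.log x) ^ 2 ≤ x := by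
  have hx0 : 0 < x := lt_of_lt_of_le (Real.exp_pos 4) hx
  have hy : (4 : ℝ) ≤ Real.log x := by
    rw [← Real.log_exp 4]
    exact Real.log_le_log (Real.exp_pos 4) hx
  set y := Real.log x with hyy
  have e2 : Real.exp (y/4) * Real.exp (y/4) = Real.exp (y/2) := by
    rw [← Real.exp_add]; ring_nf
  have e3 : Real.exp (y/2) * Real.exp (y/2) = Real.exp y := by
    rw [← Real.exp_add]; ring_nf
  have hq : y ≤ Real.exp (y/2) := by
    nlinarith [Real.add_one_le_exp (y/4), e2, sq_nonneg (1 - y/4), Real.exp_pos (y/4)]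
  have h : y ^ 2 ≤ Real.exp y := by nlinarith [Real.exp_pos (y/2)]
  calc y ^ 2 ≤ Real.exp y := h
    _ = x := Real.exp_log hx0

/-- monotonicity-type estimate: `(log x)² √t ≤ (log t)² √x` for `e⁴ ≤ t ≤ x`. -/
lemma aux_log_sq_sqrt_le {t x : ℝ} (ht : Real.exp 4 ≤ t) (hx : t ≤ x) :
    (Real.log x) ^ 2 * Real.sqrt t ≤ (Real.log t) ^ 2 * Real.sqrt x := by
  have ht0 : 0 < t := lt_of_lt_of_le (Real.exp_pos 4) ht
  have hx0 : 0 < x := lt_of_lt_of_le ht0 hx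
  have hlt : (4 : ℝ) ≤ Real.log t := by
    rw [← Real.log_exp 4]; exact Real.log_le_log (Real.exp_pos 4) ht
  have hlx : Real.log t ≤ Real.log x := Real.log_le_log ht0 hx
  have hdiv1 : (1 : ℝ) ≤ x / t := (one_le_div ht0).2 hx
  have hdiv0 : (0 : ℝ) < x / t := div_pos hx0 ht0
  set r := (x / t) ^ ((1 : ℝ)/4) with hr
  have hr1 : (1 : ℝ) ≤ r := Real.one_le_rpow hdiv1 (by norm_num)
  have hlogr : Real.log r = (1/4) * Real.log (x/t) := by
    rw [hr, Real.log_rpow hdiv0]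
  have h1 : Real.log x - Real.log t = 4 * Real.log r := by
    rw [hlogr, Real.log_div hx0.ne' ht0.ne']; ring
  have h2 : Real.log r ≤ r - 1 := Real.log_le_sub_one_of_pos (lt_of_lt_of_le one_pos hr1)
  have h3 : Real.log x ≤ Real.log t * r := by nlinarith
  have h4 : (Real.log x) ^ 2 ≤ (Real.log t) ^ 2 * r ^ 2 := by nlinarith
  have hr2 : r ^ 2 = Real.sqrt x / Real.sqrt t := by
    rw [hr, ← Real.rpow_natCast ((x/t) ^ ((1:ℝ)/4)) 2, ← Real.rpow_mul hdiv0.le]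
    norm_num
    rw [← Real.sqrt_eq_rpow, Real.sqrt_div hx0.le]
  have hst : 0 < Real.sqrt t := Real.sqrt_pos.2 ht0
  calc (Real.log x) ^ 2 * Real.sqrt t ≤ ((Real.log t) ^ 2 * r ^ 2) * Real.sqrt t :=
        mul_le_mul_of_nonneg_right h4 hst.le
    _ = (Real.log t) ^ 2 * Real.sqrt x := by
        rw [hr2]; field_simp

/-- derivative of `η ↦ (√η)^(2k+1) exp(-(aη/(log η)²))`. -/
lemma aux_hasDerivAt (a : ℝ) (k : ℕ) {x : ℝ} (hx1 : 1 < x) :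
    HasDerivAt (fun η : ℝ => Real.sqrt η ^ (2*k+1) * Real.exp (-(a * η / (Real.log η) ^ 2)))
      (Real.exp (-(a * x / (Real.log x) ^ 2)) * (x ^ k * Real.sqrt x) *
        ((2 * (k:ℝ) + 1) / (2 * x) - a * (Real.log x - 2) / (Real.log x) ^ 3)) x := by
  have hx0 : 0 < x := lt_trans one_pos hx1
  have hlx : 0 < Real.log x := Real.log_pos hx1
  have hsx : 0 < Real.sqrt x := Real.sqrt_pos.2 hx0
  have hsq : Real.sqrt x ^ 2 = x := Real.sq_sqrt hx0.le
  have h2 : HasDerivAt Real.sqrt (1 / (2 * Real.sqrt x)) x := Real.hasDerivAt_sqrt hx0.ne'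
  have h1 : HasDerivAt (fun η : ℝ => Real.sqrt η ^ (2*k+1))
      (((2*k+1 : ℕ) : ℝ) * Real.sqrt x ^ (2*k) * (1 / (2 * Real.sqrt x))) x := by
    simpa using h2.fun_pow (2*k+1)
  have hlog : HasDerivAt Real.log x⁻¹ x := Real.hasDerivAt_log hx0.ne'
  have h4 : HasDerivAt (fun η : ℝ => (Real.log η) ^ 2) (((2:ℕ):ℝ) * Real.log x ^ 1 * x⁻¹) x := by
    simpa using hlog.fun_pow 2
  have h5 : HasDerivAt (fun η : ℝ => a * η) a x := by
    simpa using (hasDerivAt_id x).const_mul a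
  have h6 : HasDerivAt (fun η : ℝ => a * η / (Real.log η) ^ 2)
      ((a * (Real.log x) ^ 2 - (a * x) * (((2:ℕ):ℝ) * Real.log x ^ 1 * x⁻¹)) /
        ((Real.log x) ^ 2) ^ 2) x := h5.div h4 (by positivity)
  have h7 := (h6.fun_neg).exp
  have h8 := h1.fun_mul h7
  refine h8.congr_deriv (Eq.symm ?_)
  have hsq' : Real.sqrt x ^ (2*k) = x ^ k := by rw [pow_mul, hsq]
  have hsq'' : Real.sqrt x ^ (2*k+1) = x ^ k * Real.sqrt x := by rw [pow_succ, hsq']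
  rw [hsq', hsq'']
  push_cast
  field_simp
  ring_nf
  rw [show Real.sqrt x ^ 2 = x from hsq]
  ring

set_option maxHeartbeats 2000000 in
/-- For `u_a(η) = exp(-a η / (ln η)²)`, any integer `k ≥ 0` and `t ≥ e⁴` with
`a t/(ln t)² ≥ 2k+2`, one has `∫_t^∞ η^k u_a(η) dη ≤ ((2k+3)/a) t^{2k+2} u_a(t)`. -/
theorem integral_pow_mul_subexp_le (a : ℝ) (ha : 0 < a) (k : ℕ) (t : ℝ)
    (ht : Real.exp 4 ≤ t)
    (hcond : (2 * (k : ℝ) + 2) ≤ a * t / (Real.log t) ^ 2) :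
    (∫ η in Set.Ioi t, η ^ k * Real.exp (-(a * η / (Real.log η) ^ 2))) ≤
      ((2 * (k : ℝ) + 3) / a) * t ^ (2 * k + 2) * Real.exp (-(a * t / (Real.log t) ^ 2)) := by
  have ht0 : 0 < t := lt_of_lt_of_le (Real.exp_pos 4) ht
  have ht1 : 1 < t := lt_of_lt_of_le (by nlinarith [Real.add_one_le_exp (4:ℝ)]) ht
  have ht2 : 2 ≤ t := le_trans (by nlinarith [Real.add_one_le_exp (4:ℝ)]) ht
  have hlt4 : (4 : ℝ) ≤ Real.log t := by
    rw [← Real.log_exp 4]; exact Real.log_le_log (Real.exp_pos 4) ht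
  have hlt0 : 0 < Real.log t := by linarith
  have hst : 0 < Real.sqrt t := Real.sqrt_pos.2 ht0
  have hstsq : Real.sqrt t * Real.sqrt t = t := Real.mul_self_sqrt ht0.le
  set c : ℝ := a * t / (Real.log t) ^ 2 with hc
  have hcc : c = a * (Real.sqrt t * Real.sqrt t) / (Real.log t) ^ 2 := by rw [hc, hstsq]
  have hc0 : 0 < c := by rw [hc]; positivity
  have hck : (2 * (k:ℝ) + 2) ≤ c := hcond
  have hca : a ≤ c := by
    rw [hc, le_div_iff₀ (by positivity)]
    nlinarith [aux_sq_log_le ht]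
  set B : ℝ := 2 * (2 * (k:ℝ) + 3) * Real.sqrt t / c with hB
  have hB0 : 0 < B := by rw [hB]; positivity
  set f : ℝ → ℝ := fun η => Real.sqrt η ^ (2*k+1) * Real.exp (-(a * η / (Real.log η) ^ 2))
    with hf
  set D : ℝ → ℝ := fun x => Real.exp (-(a * x / (Real.log x) ^ 2)) * (x ^ k * Real.sqrt x) *
        ((2 * (k:ℝ) + 1) / (2 * x) - a * (Real.log x - 2) / (Real.log x) ^ 3) with hD
  have hderiv : ∀ x ∈ Set.Ici t, HasDerivAt (fun η => -(B * f η)) (-(B * D x)) x := by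
    intro x hx
    have hx1 : 1 < x := lt_of_lt_of_le ht1 hx
    exact ((aux_hasDerivAt a k hx1).const_mul B).neg
  -- key pointwise estimate
  have key : ∀ x, t ≤ x →
      x ^ k * Real.exp (-(a * x / (Real.log x) ^ 2)) ≤ -(B * D x) := by
    intro x hx
    have hx0 : 0 < x := lt_of_lt_of_le ht0 hx
    have hx1 : 1 < x := lt_of_lt_of_le ht1 hx
    have hlx : Real.log t ≤ Real.log x := Real.log_le_log ht0 hx
    have hlx4 : (4 : ℝ) ≤ Real.log x := le_trans hlt4 hlx
    have hlx0 : 0 < Real.log x := by linarith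
    have hsx : 0 < Real.sqrt x := Real.sqrt_pos.2 hx0
    have hsxsq : Real.sqrt x * Real.sqrt x = x := Real.mul_self_sqrt hx0.le
    have hsts : Real.sqrt t ≤ Real.sqrt x := Real.sqrt_le_sqrt hx
    have hmono := aux_log_sq_sqrt_le ht hx
    have hE : 0 < Real.exp (-(a * x / (Real.log x) ^ 2)) := Real.exp_pos _
    have hb1 : a * Real.sqrt t / (2 * (Real.log t) ^ 2 * Real.sqrt x)
        ≤ a * (Real.log x - 2) / (Real.log x) ^ 3 := by
      rw [div_le_div_iff₀ (by positivity) (by positivity)]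
      nlinarith [mul_nonneg (mul_nonneg ha.le hlx0.le) (sub_nonneg.2 hmono),
        mul_nonneg (mul_nonneg ha.le (by linarith : (0:ℝ) ≤ Real.log x - 4))
          (mul_nonneg (sq_nonneg (Real.log t)) hsx.le)]
    have hb2 : (2 * (k:ℝ) + 1) / (2 * x) ≤ (2 * (k:ℝ) + 1) / (2 * Real.sqrt t * Real.sqrt x) := by
      apply div_le_div_of_nonneg_left (by positivity) (by positivity)
      nlinarith
    have hb3 : (1:ℝ) ≤ B * Real.sqrt x *
        (a * (Real.log x - 2) / (Real.log x) ^ 3 - (2 * (k:ℝ) + 1) / (2 * x)) := by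
      have he : (c - (2 * (k:ℝ) + 1)) / (2 * Real.sqrt t * Real.sqrt x)
          = a * Real.sqrt t / (2 * (Real.log t) ^ 2 * Real.sqrt x)
            - (2 * (k:ℝ) + 1) / (2 * Real.sqrt t * Real.sqrt x) := by
        rw [hcc]; field_simp
      have hlow : (c - (2 * (k:ℝ) + 1)) / (2 * Real.sqrt t * Real.sqrt x) ≤
          a * (Real.log x - 2) / (Real.log x) ^ 3 - (2 * (k:ℝ) + 1) / (2 * x) := by
        rw [he]; exact sub_le_sub hb1 hb2
      have hBmul : B * Real.sqrt x * ((c - (2 * (k:ℝ) + 1)) / (2 * Real.sqrt t * Real.sqrt x))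
          = (2 * (k:ℝ) + 3) * (c - (2 * (k:ℝ) + 1)) / c := by
        rw [hB]; field_simp
      have hfrac : (1:ℝ) ≤ (2 * (k:ℝ) + 3) * (c - (2 * (k:ℝ) + 1)) / c := by
        rw [le_div_iff₀ hc0]; nlinarith
      calc (1:ℝ) ≤ (2 * (k:ℝ) + 3) * (c - (2 * (k:ℝ) + 1)) / c := hfrac
        _ = B * Real.sqrt x * ((c - (2 * (k:ℝ) + 1)) / (2 * Real.sqrt t * Real.sqrt x)) :=
            hBmul.symm
        _ ≤ B * Real.sqrt x *
            (a * (Real.log x - 2) / (Real.log x) ^ 3 - (2 * (k:ℝ) + 1) / (2 * x)) := by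
          apply mul_le_mul_of_nonneg_left hlow (by positivity)
    have hxk : 0 < (x:ℝ) ^ k := by positivity
    have hexpand : -(B * D x) = (x ^ k * Real.exp (-(a * x / (Real.log x) ^ 2))) *
        (B * Real.sqrt x *
          (a * (Real.log x - 2) / (Real.log x) ^ 3 - (2 * (k:ℝ) + 1) / (2 * x))) := by
      rw [hD]; ring
    rw [hexpand]
    nlinarith [mul_le_mul_of_nonneg_left hb3 (le_of_lt (mul_pos hxk hE))]
  have hDpos : ∀ x ∈ Set.Ioi t, 0 ≤ -(B * D x) := by
    intro x hx
    have hx0 : 0 < x := lt_trans ht0 hx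
    exact le_trans (by positivity) (key x (le_of_lt hx))
  -- limit at infinity
  have htend : Tendsto (fun η => -(B * f η)) atTop (nhds 0) := by
    have hd : 0 < c / Real.sqrt t := by positivity
    have hcomp : Tendsto (fun η : ℝ => (c / Real.sqrt t * Real.sqrt η) ^ (2*k+1) *
        Real.exp (-(c / Real.sqrt t * Real.sqrt η))) atTop (nhds 0) := by
      apply (Real.tendsto_pow_mul_exp_neg_atTop_nhds_zero (2*k+1)).comp
      have hsqrtTop : Tendsto Real.sqrt atTop atTop := by
        have hfun : Real.sqrt = fun x : ℝ => x ^ ((1:ℝ)/2) := funext Real.sqrt_eq_rpow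
        rw [hfun]
        exact tendsto_rpow_atTop (by norm_num)
      exact Tendsto.const_mul_atTop hd hsqrtTop
    have hbound : ∀ᶠ x in atTop, B * f x ≤
        B / (c / Real.sqrt t) ^ (2*k+1) * ((c / Real.sqrt t * Real.sqrt x) ^ (2*k+1) *
          Real.exp (-(c / Real.sqrt t * Real.sqrt x))) := by
      filter_upwards [eventually_ge_atTop t] with x hx
      have hx0 : 0 < x := lt_of_lt_of_le ht0 hx
      have hlx0 : 0 < Real.log x := Real.log_pos (lt_of_lt_of_le ht1 hx)
      have hsx : 0 < Real.sqrt x := Real.sqrt_pos.2 hx0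
      have hsxsq : Real.sqrt x * Real.sqrt x = x := Real.mul_self_sqrt hx0.le
      have hmono := aux_log_sq_sqrt_le ht hx
      have hψ : c / Real.sqrt t * Real.sqrt x ≤ a * x / (Real.log x) ^ 2 := by
        rw [hcc, div_div, div_mul_eq_mul_div, div_le_div_iff₀ (by positivity) (by positivity)]
        nlinarith [mul_nonneg (mul_nonneg (mul_nonneg ha.le hsx.le) hst.le)
          (sub_nonneg.2 hmono),
          (by rw [hsxsq] : a * (Real.sqrt x * Real.sqrt x) * ((Real.log t) ^ 2 * Real.sqrt t)
            = a * x * ((Real.log t) ^ 2 * Real.sqrt t))]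
      have heq : B / (c / Real.sqrt t) ^ (2*k+1) * ((c / Real.sqrt t * Real.sqrt x) ^ (2*k+1) *
          Real.exp (-(c / Real.sqrt t * Real.sqrt x)))
          = B * (Real.sqrt x ^ (2*k+1) * Real.exp (-(c / Real.sqrt t * Real.sqrt x))) := by
        rw [mul_pow]
        field_simp
      rw [heq, hf]
      have : Real.exp (-(a * x / (Real.log x) ^ 2)) ≤
          Real.exp (-(c / Real.sqrt t * Real.sqrt x)) :=
        Real.exp_le_exp.2 (neg_le_neg hψ)
      have hp : (0:ℝ) ≤ Real.sqrt x ^ (2*k+1) := by positivity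
      nlinarith [mul_le_mul_of_nonneg_left this hp, hB0, Real.exp_pos (-(a * x / (Real.log x) ^ 2))]
    have h0 : ∀ᶠ x in atTop, 0 ≤ B * f x := by
      filter_upwards [eventually_ge_atTop (1:ℝ)] with x hx
      have hfx : 0 ≤ f x := by
        rw [hf]
        positivity
      positivity
    have := squeeze_zero' h0 hbound
      (by simpa using hcomp.const_mul (B / (c / Real.sqrt t) ^ (2*k+1)))
    simpa using this.neg
  have hint := integral_Ioi_of_hasDerivAt_of_nonneg' hderiv hDpos htend
  have hintD : IntegrableOn (fun x => -(B * D x)) (Set.Ioi t) :=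
    integrableOn_Ioi_deriv_of_nonneg' hderiv hDpos htend
  have hcont : ContinuousOn (fun η : ℝ => η ^ k * Real.exp (-(a * η / (Real.log η) ^ 2)))
      (Set.Ioi t) := by
    intro x hx
    have hx0 : 0 < x := lt_trans ht0 hx
    have hlx0 : 0 < Real.log x := Real.log_pos (lt_trans ht1 hx)
    apply ContinuousAt.continuousWithinAt
    have h1 : ContinuousAt (fun η : ℝ => a * η / (Real.log η) ^ 2) x :=
      (continuousAt_const.mul continuousAt_id).div
        ((Real.continuousAt_log hx0.ne').pow 2) (by positivity)
    exact (continuousAt_id.pow k).mul (h1.neg.rexp)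
  have hintegrand : IntegrableOn (fun η : ℝ => η ^ k * Real.exp (-(a * η / (Real.log η) ^ 2)))
      (Set.Ioi t) := by
    apply Integrable.mono' hintD (hcont.aestronglyMeasurable measurableSet_Ioi)
    filter_upwards [ae_restrict_mem measurableSet_Ioi] with x hx
    have hx0 : 0 < x := lt_trans ht0 hx
    rw [Real.norm_eq_abs, abs_of_nonneg (by positivity)]
    exact key x (le_of_lt hx)
  have hle : (∫ η in Set.Ioi t, η ^ k * Real.exp (-(a * η / (Real.log η) ^ 2)))
      ≤ ∫ x in Set.Ioi t, -(B * D x) := by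
    apply setIntegral_mono_on hintegrand hintD measurableSet_Ioi
    intro x hx
    exact key x (le_of_lt hx)
  rw [hint] at hle
  have hft : f t = t ^ k * Real.sqrt t * Real.exp (-(a * t / (Real.log t) ^ 2)) := by
    have hss : Real.sqrt t ^ (2*k+1) = t ^ k * Real.sqrt t := by
      rw [pow_succ, pow_mul, Real.sq_sqrt ht0.le]
    show Real.sqrt t ^ (2*k+1) * Real.exp (-(a * t / (Real.log t) ^ 2)) = _
    rw [hss]
  have hfinal : 0 - -(B * f t) ≤ ((2 * (k : ℝ) + 3) / a) * t ^ (2 * k + 2)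
      * Real.exp (-(a * t / (Real.log t) ^ 2)) := by
    rw [zero_sub, neg_neg, hft]
    have hT2 : (2:ℝ) ≤ t ^ (k+1) := by
      calc (2:ℝ) ≤ t := ht2
        _ = t ^ 1 := (pow_one t).symm
        _ ≤ t ^ (k+1) := pow_le_pow_right₀ (le_of_lt ht1) (by omega)
    have hTT : t ^ (2*k+2) = t ^ (k+1) * t ^ (k+1) := by
      rw [← pow_add]; ring_nf
    have hTpos : (0:ℝ) < t ^ (k+1) := by positivity
    have he : B * (t ^ k * Real.sqrt t) = 2 * (2 * (k:ℝ) + 3) * t ^ (k+1) / c := by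
      rw [hB, pow_succ]
      field_simp
      ring_nf
      rw [Real.sq_sqrt ht0.le]
    have hmul : B * (t ^ k * Real.sqrt t) ≤ (2 * (k:ℝ) + 3) / a * t ^ (2*k+2) := by
      rw [he, hTT, div_le_iff₀ hc0, div_mul_eq_mul_div, div_mul_eq_mul_div, le_div_iff₀ ha]
      nlinarith [mul_le_mul_of_nonneg_left (mul_le_mul hT2 hca ha.le hTpos.le)
        (by positivity : (0:ℝ) ≤ (2 * (k:ℝ) + 3) * t ^ (k + 1))]
    calc B * (t ^ k * Real.sqrt t * Real.exp (-(a * t / (Real.log t) ^ 2)))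
        = B * (t ^ k * Real.sqrt t) * Real.exp (-(a * t / (Real.log t) ^ 2)) := by ring
      _ ≤ (2 * (k:ℝ) + 3) / a * t ^ (2*k+2) * Real.exp (-(a * t / (Real.log t) ^ 2)) :=
          mul_le_mul_of_nonneg_right hmul (Real.exp_pos _).le
  exact le_trans hle hfinal
end

section
/- Let γ > 0 and define a_1 > 0 and a_n = a_1/(n (ln n)²) for n ≥ 2 so that ∑_{n=1}^∞ a_n = γ/2 (the series converges). Then the infinite product w_γ(t) = c_γ ∏_{n=1}^∞ (sin(a_n t)/(a_n t))² converges for every real t, defines an even nonnegative function with 0 ≤ w_γ(t) ≤ c_γ, and w_γ ∈ L¹(ℝ). -/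
open Real MeasureTheory

/-- `sinc x = sin x / x`, with the value `1` at `x = 0`. -/
noncomputable def sinc (x : ℝ) : ℝ := if x = 0 then 1 else Real.sin x / x

lemma sinc_neg (x : ℝ) : _root_.sinc (-x) = _root_.sinc x := by
  unfold _root_.sinc
  rcases eq_or_ne x 0 with h | h
  · simp [h]
  · rw [if_neg (neg_ne_zero.mpr h), if_neg h, Real.sin_neg, neg_div_neg_eq]

lemma measurable_sinc : Measurable _root_.sinc := by
  unfold _root_.sinc
  exact Measurable.ite (measurableSet_eq) measurable_const
    (Real.measurable_sin.div measurable_id)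

lemma sinc_sq_le_one (x : ℝ) : _root_.sinc x ^ 2 ≤ 1 := by
  unfold _root_.sinc
  rcases eq_or_ne x 0 with h | h
  · simp [h]
  · rw [if_neg h, div_pow, div_le_one (by positivity)]
    exact Real.sin_sq_le_sq

lemma sinc_sq_le (x : ℝ) : _root_.sinc x ^ 2 ≤ 2 * (1 + x ^ 2)⁻¹ := by
  unfold _root_.sinc
  rcases eq_or_ne x 0 with h | h
  · norm_num [h]
  · rw [if_neg h, div_pow, ← div_eq_mul_inv, div_le_div_iff₀ (by positivity) (by positivity)]
    nlinarith [Real.sin_sq_le_sq (x := x), Real.sin_sq_le_one x, sq_nonneg x,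
      mul_le_mul_of_nonneg_right (Real.sin_sq_le_one x) (sq_nonneg x)]

lemma hasProd_iInf {f : ℕ → ℝ} (h0 : ∀ n, 0 ≤ f n) (h1 : ∀ n, f n ≤ 1) :
    HasProd f (⨅ s : Finset ℕ, ∏ i ∈ s, f i) := by
  have hanti : Antitone (fun s : Finset ℕ => ∏ i ∈ s, f i) := by
    intro s t hst
    calc ∏ i ∈ t, f i = (∏ i ∈ t \ s, f i) * ∏ i ∈ s, f i := (Finset.prod_sdiff hst).symm
      _ ≤ 1 * ∏ i ∈ s, f i := by
          apply mul_le_mul_of_nonneg_right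
          · exact Finset.prod_le_one (fun i _ => h0 i) (fun i _ => h1 i)
          · exact Finset.prod_nonneg fun i _ => h0 i
      _ = ∏ i ∈ s, f i := one_mul _
  have hbdd : BddBelow (Set.range fun s : Finset ℕ => ∏ i ∈ s, f i) := by
    refine ⟨0, ?_⟩
    rintro x ⟨s, rfl⟩
    exact Finset.prod_nonneg fun i _ => h0 i
  exact tendsto_atTop_ciInf hanti hbdd

/-- Let `γ > 0` and `a_1 > 0`, `a_n = a_1/(n (ln n)²)` for `n ≥ 2`, with the (convergent)
series summing to `γ/2`.  Then the infinite product
`w_γ(t) = c_γ ∏_{n≥1} (sin(a_n t)/(a_n t))²` converges for every `t`, defines an even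
nonnegative function with `0 ≤ w_γ(t) ≤ c_γ`, and `w_γ ∈ L¹(ℝ)`. -/
theorem infinite_product_weight_properties (γ : ℝ) (hγ : 0 < γ)
    (a : ℕ → ℝ) (ha1 : 0 < a 1)
    (han : ∀ n : ℕ, 2 ≤ n → a n = a 1 / (n * (Real.log n) ^ 2))
    (hsummable : Summable (fun n : ℕ => a (n + 1)))
    (hsum : ∑' n : ℕ, a (n + 1) = γ / 2)
    (c : ℝ) (hc : 0 < c)
    (w : ℝ → ℝ) (hw : ∀ t, w t = c * ∏' n : ℕ, (_root_.sinc (a (n + 1) * t)) ^ 2) :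
    (∀ t : ℝ, Multipliable (fun n : ℕ => (_root_.sinc (a (n + 1) * t)) ^ 2)) ∧
    (∀ t : ℝ, w (-t) = w t) ∧
    (∀ t : ℝ, 0 ≤ w t ∧ w t ≤ c) ∧
    Integrable w := by
  set f : ℝ → ℕ → ℝ := fun t n => (_root_.sinc (a (n + 1) * t)) ^ 2 with hf
  have h0 : ∀ t n, 0 ≤ f t n := fun t n => sq_nonneg _
  have h1 : ∀ t n, f t n ≤ 1 := fun t n => _root_.sinc_sq_le_one _
  have hHP : ∀ t, HasProd (f t) (⨅ s : Finset ℕ, ∏ i ∈ s, f t i) :=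
    fun t => hasProd_iInf (h0 t) (h1 t)
  have hM : ∀ t, Multipliable (f t) := fun t => ⟨_, hHP t⟩
  have htp : ∀ t, ∏' n, f t n = ⨅ s : Finset ℕ, ∏ i ∈ s, f t i :=
    fun t => (hHP t).tprod_eq
  have hbdd : ∀ t, BddBelow (Set.range fun s : Finset ℕ => ∏ i ∈ s, f t i) := by
    intro t
    refine ⟨0, ?_⟩
    rintro x ⟨s, rfl⟩
    exact Finset.prod_nonneg fun i _ => h0 t i
  have htp_nonneg : ∀ t, 0 ≤ ∏' n, f t n := by
    intro t
    rw [htp t]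
    exact le_ciInf fun s => Finset.prod_nonneg fun i _ => h0 t i
  have htp_le_one : ∀ t, ∏' n, f t n ≤ 1 := by
    intro t
    rw [htp t]
    simpa using ciInf_le (hbdd t) (∅ : Finset ℕ)
  have htp_le_f0 : ∀ t, ∏' n, f t n ≤ f t 0 := by
    intro t
    rw [htp t]
    simpa using ciInf_le (hbdd t) ({0} : Finset ℕ)
  refine ⟨hM, ?_, ?_, ?_⟩
  · intro t
    rw [hw, hw]
    congr 1
    apply tprod_congr
    intro n
    rw [mul_neg, _root_.sinc_neg]
  · intro t
    rw [hw]
    constructor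
    · exact mul_nonneg hc.le (htp_nonneg t)
    · calc c * ∏' n, f t n ≤ c * 1 := by
            exact mul_le_mul_of_nonneg_left (htp_le_one t) hc.le
        _ = c := mul_one c
  · -- Integrability
    have hmeas : AEStronglyMeasurable w volume := by
      apply aestronglyMeasurable_of_tendsto_ae (Filter.atTop : Filter ℕ)
        (f := fun n t => c * ∏ i ∈ Finset.range n, f t i)
      · intro n
        apply Measurable.aestronglyMeasurable
        apply Measurable.const_mul
        apply Finset.measurable_prod
        intro i _
        exact ((_root_.measurable_sinc.comp (measurable_id.const_mul _)).pow_const 2)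
      · filter_upwards with t
        rw [hw t, htp t]
        exact ((hHP t).tendsto_prod_nat).const_mul c
    have hg : Integrable (fun t : ℝ => c * (2 * (1 + (a 1 * t) ^ 2)⁻¹)) := by
      have h1 : Integrable (fun x : ℝ => (1 + x ^ 2)⁻¹) := integrable_inv_one_add_sq
      have h2 : Integrable (fun t : ℝ => (1 + (a 1 * t) ^ 2)⁻¹) :=
        h1.comp_mul_left' ha1.ne'
      simpa [mul_assoc] using (h2.const_mul (c * 2))
    apply hg.mono' hmeas
    filter_upwards with t
    rw [Real.norm_eq_abs, hw t,
      abs_of_nonneg (mul_nonneg hc.le (htp_nonneg t))]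
    apply mul_le_mul_of_nonneg_left _ hc.le
    calc ∏' n, f t n ≤ f t 0 := htp_le_f0 t
      _ ≤ 2 * (1 + (a 1 * t) ^ 2)⁻¹ := by
          simpa using _root_.sinc_sq_le (a (0 + 1) * t)
end

section
/- With w_γ as above (the normalized infinite product with ∫ w_γ = 1 and γ/(2π) < c_γ < γ/π, γ/7 < a_1 < γ/2), for every t ≥ e^{1/√2}/γ one has 0 ≤ w_γ(t) ≤ 2(eγ)² t · exp(−(2/7)·γt/(ln(γt))²). -/
open Real MeasureTheory

namespace WD

lemma tprod_zero {f : ℕ → ℝ} (n0 : ℕ) (h : f n0 = 0) : ∏' n, f n = 0 := by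
  have h0 : HasProd f 0 := by
    have hev : ∀ᶠ s : Finset ℕ in Filter.atTop, (fun _ : Finset ℕ => (0:ℝ)) s = ∏ i ∈ s, f i := by
      filter_upwards [Filter.eventually_ge_atTop ({n0} : Finset ℕ)] with s hs
      exact (Finset.prod_eq_zero (hs (Finset.mem_singleton_self n0)) h).symm
    exact (tendsto_const_nhds : Filter.Tendsto _ _ (nhds (0:ℝ))).congr' hev
  exact h0.tprod_eq

lemma sinc_sq_le_one (u : ℝ) : _root_.sinc u ^ 2 ≤ 1 := by
  unfold _root_.sinc
  split_ifs with h
  · norm_num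
  · rw [div_pow]
    rw [div_le_one (by positivity)]
    exact Real.sin_sq_le_sq

lemma sinc_sq_le {u : ℝ} (h : u ≠ 0) : _root_.sinc u ^ 2 ≤ 1 / u ^ 2 := by
  unfold _root_.sinc
  rw [if_neg h, div_pow]
  exact div_le_div₀ (by norm_num) (Real.sin_sq_le_one u) (by positivity) le_rfl

lemma sinc_sq_ge {u : ℝ} (h0 : 0 < u) (h1 : u ≤ 1) : 1 - u ^ 2 / 2 ≤ _root_.sinc u ^ 2 := by
  unfold _root_.sinc
  rw [if_neg h0.ne']
  have hs := Real.sin_gt_sub_cube h0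
  have hsin : u - u ^ 3 / 4 ≤ Real.sin u := by linarith [hs, pow_pos h0 3]
  have h2 : 1 - u ^ 2 / 4 ≤ Real.sin u / u := by
    rw [le_div_iff₀ h0]; nlinarith
  have h3 : (0:ℝ) ≤ 1 - u ^ 2 / 4 := by nlinarith
  calc 1 - u ^ 2 / 2 ≤ (1 - u ^ 2 / 4) ^ 2 := by nlinarith
  _ ≤ (Real.sin u / u) ^ 2 := by gcongr
  _ = _ := rfl

lemma sinc_pos {u : ℝ} (h0 : u ≠ 0) (hs : Real.sin u ≠ 0) : 0 < _root_.sinc u ^ 2 := by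
  unfold _root_.sinc
  rw [if_neg h0]
  positivity

lemma sum_log_le (m : ℕ) :
    ∑ i ∈ Finset.range m, Real.log (i + 2) ≤
      ((m:ℝ) + 1) * Real.log (m + 1) - m + Real.log (m + 1) := by
  induction m with
  | zero => simp
  | succ m ih =>
    rw [Finset.sum_range_succ]
    have hm2 : (0:ℝ) < (m:ℝ) + 2 := by positivity
    have hm1 : (0:ℝ) < (m:ℝ) + 1 := by positivity
    have key : (1:ℝ) ≤ ((m:ℝ) + 2) * (Real.log ((m:ℝ) + 2) - Real.log ((m:ℝ) + 1)) := by
      have h1 : Real.log (((m:ℝ) + 1) / ((m:ℝ) + 2)) ≤ ((m:ℝ) + 1) / ((m:ℝ) + 2) - 1 :=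
        Real.log_le_sub_one_of_pos (by positivity)
      rw [Real.log_div hm1.ne' hm2.ne'] at h1
      have hdiv : ((m:ℝ) + 2) * (((m:ℝ) + 1) / ((m:ℝ) + 2) - 1) = -1 := by
        field_simp; norm_num
      nlinarith [h1, hdiv, hm2]
    push_cast
    have e1 : (m:ℝ) + 1 + 1 = (m:ℝ) + 2 := by ring
    rw [e1]
    linarith [key, ih]

lemma sum_loglog_le (m : ℕ) :
    ∑ i ∈ Finset.range m, Real.log (Real.log (i + 2)) ≤
      (m:ℝ) * Real.log (Real.log (m + 1)) := by
  calc ∑ i ∈ Finset.range m, Real.log (Real.log (i + 2))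
      ≤ ∑ _i ∈ Finset.range m, Real.log (Real.log (m + 1)) := by
        apply Finset.sum_le_sum
        intro i hi
        have hi' : (i:ℝ) + 2 ≤ (m:ℝ) + 1 := by
          have h := Finset.mem_range.1 hi
          have : (i:ℝ) + 1 ≤ (m:ℝ) := by exact_mod_cast h
          linarith
        have h2 : (0:ℝ) < Real.log ((i:ℝ) + 2) := by
          apply Real.log_pos
          have := Nat.cast_nonneg (α := ℝ) i
          linarith
        exact Real.log_le_log h2 (Real.log_le_log (by positivity) hi')
  _ = (m:ℝ) * Real.log (Real.log (m + 1)) := by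
        rw [Finset.sum_const, Finset.card_range, nsmul_eq_mul]

/-- upper bound on `exp (p/q)` via rational arithmetic -/
lemma exp_div_le {p q : ℕ} {B : ℝ} (hq : q ≠ 0) (hB : 0 < B)
    (h : (2.7182818286 : ℝ) ^ p ≤ B ^ q) : Real.exp ((p : ℝ) / q) ≤ B := by
  have h1 : Real.exp ((p : ℝ) / q) ^ q = Real.exp p := by
    rw [← Real.exp_nat_mul]
    congr 1
    field_simp
  have h2 : Real.exp (p : ℝ) ≤ (2.7182818286 : ℝ) ^ p := by
    rw [← Real.exp_one_pow]
    exact pow_le_pow_left₀ (Real.exp_pos 1).le Real.exp_one_lt_d9.le p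
  exact le_of_pow_le_pow_left₀ hq hB.le (by rw [h1]; exact h2.trans h)

lemma le_exp_div {p q : ℕ} {B : ℝ} (hq : q ≠ 0)
    (h : B ^ q ≤ (2.7182818283 : ℝ) ^ p) : B ≤ Real.exp ((p : ℝ) / q) := by
  have h1 : Real.exp ((p : ℝ) / q) ^ q = Real.exp p := by
    rw [← Real.exp_nat_mul]; congr 1; field_simp
  have h2 : (2.7182818283 : ℝ) ^ p ≤ Real.exp (p:ℝ) := by
    rw [← Real.exp_one_pow]
    exact pow_le_pow_left₀ (by norm_num) Real.exp_one_gt_d9.le p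
  exact le_of_pow_le_pow_left₀ hq (Real.exp_pos _).le (by rw [h1]; exact h.trans h2)

lemma poly_mono {l L : ℝ} (h1 : (0.7:ℝ) ≤ l) (h2 : l ≤ L) :
    7*l^2*(3*l - 7/100) ≤ 7*L^2*(3*L - 7/100) := by
  have h3 : (0:ℝ) ≤ L - l := by linarith
  have hl0 : (0:ℝ) < l := by linarith
  have hL0 : (0:ℝ) < L := by linarith
  nlinarith [mul_nonneg (mul_nonneg h3 hL0.le) (by linarith : (0:ℝ) ≤ 21*L - 49/100),
             mul_nonneg (mul_nonneg h3 hl0.le) (by linarith : (0:ℝ) ≤ 21*l - 49/100),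
             mul_nonneg (mul_nonneg h3 hL0.le) hl0.le]

lemma small_case {L x : ℝ} (hxL : Real.exp L = x) (h07 : (0.7:ℝ) ≤ L) (h85 : L ≤ 17/2) :
    2*x ≤ 7*L^2*(3*L - 7/100) := by
  have hexp : ∀ p q : ℕ, ∀ B : ℝ, q ≠ 0 → 0 < B → (2.7182818286 : ℝ) ^ p ≤ B ^ q →
      L ≤ (p:ℝ)/q → x ≤ B := by
    intro p q B hq hB h hLpq
    rw [← hxL]
    exact le_trans (Real.exp_le_exp.2 hLpq) (exp_div_le hq hB h)
  rcases le_total L (22/25) with h | h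
  · have hxu : x ≤ 2.42 := hexp 22 25 _ (by norm_num) (by norm_num) (by norm_num) (by push_cast; linarith)
    nlinarith [poly_mono (le_refl (0.7:ℝ)) h07]
  · rcases le_total L (7/4) with h' | h'
    · have hxu : x ≤ 5.76 := hexp 7 4 _ (by norm_num) (by norm_num) (by norm_num) (by push_cast; linarith)
      nlinarith [poly_mono (by norm_num : (0.7:ℝ) ≤ 22/25) h]
    · rcases le_total L (39/10) with h'' | h''
      · have hxu : x ≤ 49.5 := hexp 39 10 _ (by norm_num) (by norm_num) (by norm_num) (by push_cast; linarith)
        nlinarith [poly_mono (by norm_num : (0.7:ℝ) ≤ 7/4) h']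
      · rcases le_total L (127/20) with h3 | h3
        · have hxu : x ≤ 575 := hexp 127 20 _ (by norm_num) (by norm_num) (by norm_num) (by push_cast; linarith)
          nlinarith [poly_mono (by norm_num : (0.7:ℝ) ≤ 39/10) h'']
        · rcases le_total L (157/20) with h4 | h4
          · have hxu : x ≤ 2570 := hexp 157 20 _ (by norm_num) (by norm_num) (by norm_num) (by push_cast; linarith)
            nlinarith [poly_mono (by norm_num : (0.7:ℝ) ≤ 127/20) h3]
          · have hxu : x ≤ 4920 := hexp 17 2 _ (by norm_num) (by norm_num) (by norm_num) (by push_cast; linarith)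
            nlinarith [poly_mono (by norm_num : (0.7:ℝ) ≤ 157/20) h4]

set_option maxHeartbeats 2000000 in
lemma hard_final {L lam nu m S E Lg LLg lM l7 : ℝ}
    (hL : (17:ℝ)/2 ≤ L)
    (hl7l : (1.94:ℝ) ≤ l7) (hl7u : l7 ≤ 1.95)
    (hlam : (2.12:ℝ) ≤ lam) (hlamu : lam ≤ L * (100/271))
    (hcase : (2.2:ℝ) ≤ lam ∨ L ≤ 9.05)
    (hnu : 17/140 * L^2 ≤ nu)
    (hm1 : nu - 1 ≤ m)
    (hE : E ≤ 2*m + 2)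
    (hLg0 : 0 < Lg)
    (hLg : Lg ≤ L - l7 - 2*lam + 1/nu)
    (hLLg : LLg ≤ lam - (2*lam + l7 - 1/nu)/L)
    (hS : S ≤ 2*(m+1)*Lg - 2*m + 2*Lg + 4*m*LLg - 2*m*lM)
    (hlM : L - l7 ≤ lM) :
    S + E ≤ 1.83 + L + 2 := by
  have hL0 : (0:ℝ) < L := by linarith
  have hL85 : (8.5:ℝ) ≤ L := by linarith
  have hLsq : (72.25:ℝ) ≤ L^2 := by
    have h1 : (8.5:ℝ)*8.5 ≤ L*L := mul_le_mul hL85 hL85 (by norm_num) (by linarith)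
    have h2 : L^2 = L*L := pow_two L
    linarith
  have hnu877 : (8.77:ℝ) ≤ nu := by linarith
  have hnu0 : (0:ℝ) < nu := by linarith
  set eps := 1/nu with heps_def
  clear_value eps
  have heps0 : 0 < eps := by rw [heps_def]; positivity
  have hepsu : eps ≤ 0.115 := by
    rw [heps_def, div_le_iff₀ hnu0]; linarith
  have hnueps : nu * eps = 1 := by rw [heps_def]; field_simp
  have hepsL : eps * L ≤ 0.97 := by
    have h1 : eps * (17/140 * L^2) ≤ eps * nu := mul_le_mul_of_nonneg_left hnu heps0.le
    have h2 : eps * L * L ≤ 140/17 := by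
      have h2a : eps * (17/140 * L^2) = 17/140 * (eps * L * L) := by ring
      have h2b : eps * nu = nu * eps := by ring
      linarith [hnueps]
    have h3 : eps * L * (17/2) ≤ eps * L * L :=
      mul_le_mul_of_nonneg_left hL (mul_nonneg heps0.le hL0.le)
    linarith
  set sg := 2*lam + l7 - eps with hsg_def
  clear_value sg
  have hsg6 : (6:ℝ) ≤ sg := by rw [hsg_def]; linarith
  have hsgL : sg ≤ 0.97 * L := by
    rw [hsg_def]
    have h195 : (1.95:ℝ) ≤ (23/100)*L := by linarith
    linarith
  have hq0 : 0 ≤ sg / L := div_nonneg (by linarith) hL0.le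
  have hqL : sg / L * L = sg := div_mul_cancel₀ sg hL0.ne'
  have hq097 : sg / L ≤ 0.97 := by rw [div_le_iff₀ hL0]; linarith
  have hD : Lg + 2*LLg - (L - l7) ≤ eps - 2*(sg/L) := by linarith [hLg, hLLg]
  have hBneg : eps - 2*(sg/L) ≤ 0 := by
    have h6 : 6 * L ≤ sg / L * (L * L) := by
      have : sg / L * (L * L) = (sg / L * L) * L := by ring
      rw [this, hqL]
      calc (6:ℝ) * L ≤ sg * L := mul_le_mul_of_nonneg_right hsg6 hL0.le
      _ = sg * L := rfl
    have h7 : eps * (L * L) ≤ 0.97 * L := by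
      have : eps * (L * L) = (eps * L) * L := by ring
      rw [this]
      exact mul_le_mul_of_nonneg_right hepsL hL0.le
    have h8 : (eps - 2*(sg/L)) * (L*L) ≤ 0.97*L - 2*(6*L) := by
      have hexp : (eps - 2*(sg/L))*(L*L) = eps*(L*L) - 2*(sg/L*(L*L)) := by ring
      linarith
    have h9 : (0:ℝ) < L*L := mul_pos hL0 hL0
    by_contra hA
    push_neg at hA
    have h10 := mul_pos hA h9
    linarith [h8, hL85]
  have hm0 : (7:ℝ) ≤ m := by linarith
  have hstep1 : 2*m*(Lg + 2*LLg - (L - l7)) ≤ 2*(nu-1)*(eps - 2*(sg/L)) := by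
    have t1 : 2*m*(Lg + 2*LLg - (L - l7)) ≤ 2*m*(eps - 2*(sg/L)) :=
      mul_le_mul_of_nonneg_left hD (by linarith)
    have t2 : 2*m*(eps - 2*(sg/L)) ≤ 2*(nu-1)*(eps - 2*(sg/L)) :=
      mul_le_mul_of_nonpos_right (by linarith) hBneg
    linarith
  clear hD hBneg hepsL
  have hexpand : 2*(nu-1)*(eps - 2*(sg/L))
      = 2*(nu*eps) - 4*(nu*(sg/L)) - 2*eps + 4*(sg/L) := by ring
  have hnq : 17/140*(L*sg) ≤ nu*(sg/L) := by
    have h1 : 17/140 * L^2 * (sg/L) ≤ nu*(sg/L) := mul_le_mul_of_nonneg_right hnu hq0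
    have h2 : 17/140 * L^2 * (sg/L) = 17/140 * (L * (sg/L*L)) := by ring
    rw [h2, hqL] at h1
    linarith
  have hmain : S + E ≤ 2*m*(Lg + 2*LLg - (L - l7)) + 4*Lg + 2 := by
    have hlMm : 2*m*(L - l7) ≤ 2*m*lM :=
      mul_le_mul_of_nonneg_left hlM (by linarith)
    have hexp2 : 2*(m+1)*Lg - 2*m + 2*Lg + 4*m*LLg
        = 2*m*(Lg + 2*LLg) + 4*Lg - 2*m := by ring
    have hexp3 : 2*m*(Lg + 2*LLg - (L - l7)) = 2*m*(Lg + 2*LLg) - 2*m*(L - l7) := by ring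
    linarith [hS, hE]
  have hLg4 : 4*Lg ≤ 4*L - 8*lam - 7.3 := by linarith [hLg, hl7l, hepsu]
  have htot : S + E ≤ 4*L - 8*lam + 0.58 - 4*(nu*(sg/L)) := by
    linarith [hmain, hstep1, hexpand, hnueps, heps0, hq097, hLg4]
  have h32 : (17/35)*(L*sg) ≤ 4*(nu*(sg/L)) := by linarith [hnq]
  clear hmain hstep1 hexpand hnueps hq0 hqL hnq hsg6 hsgL hq097 hS hE hlM hLg4 hLg hLLg
    hLg0 hm0 hm1 hnu877 hnu0 hnu hl7u hlamu hLsq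
  rcases hcase with hc | hc
  · have hsg622 : (6.225:ℝ) ≤ sg := by rw [hsg_def]; linarith
    have h31 : 3*L ≤ (17/35)*(L*sg) := by
      have h1 : L * 6.225 ≤ L * sg := mul_le_mul_of_nonneg_left hsg622 hL0.le
      linarith
    linarith [htot, h31, h32, hlam]
  · have hsg6045 : (6.045:ℝ) ≤ sg := by rw [hsg_def]; linarith
    have h31 : (17/35)*(6.045*L) ≤ (17/35)*(L*sg) := by
      have h1 : L * 6.045 ≤ L * sg := mul_le_mul_of_nonneg_left hsg6045 hL0.le
      linarith
    linarith [htot, h31, h32, hlam, hc]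

end WD

set_option maxHeartbeats 4000000 in
/-- With `w_γ` the normalized infinite product (`∫ w_γ = 1`, `γ/(2π) < c_γ < γ/π`,
`γ/7 < a_1 < γ/2`), for every `t ≥ e^{1/√2}/γ` one has
`0 ≤ w_γ(t) ≤ 2(eγ)² t exp(−(2/7) γt/(ln(γt))²)`. -/
theorem weight_decay_bound (γ : ℝ) (hγ : 0 < γ)
    (a : ℕ → ℝ) (ha1l : γ / 7 < a 1) (ha1u : a 1 < γ / 2)
    (han : ∀ n : ℕ, 2 ≤ n → a n = a 1 / (n * (Real.log n) ^ 2))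
    (hsummable : Summable (fun n : ℕ => a (n + 1)))
    (hsum : ∑' n : ℕ, a (n + 1) = γ / 2)
    (c : ℝ) (hcl : γ / (2 * Real.pi) < c) (hcu : c < γ / Real.pi)
    (w : ℝ → ℝ) (hw : ∀ t, w t = c * ∏' n : ℕ, (_root_.sinc (a (n + 1) * t)) ^ 2)
    (hnormalized : ∫ t, w t = 1)
    (t : ℝ) (ht : Real.exp (1 / Real.sqrt 2) / γ ≤ t) :
    0 ≤ w t ∧
      w t ≤ 2 * (Real.exp 1 * γ) ^ 2 * t *
        Real.exp (-((2 / 7) * (γ * t) / (Real.log (γ * t)) ^ 2)) := by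
  have hπ := Real.pi_pos
  have ht0 : 0 < t := lt_of_lt_of_le (by positivity) ht
  have ha10 : 0 < a 1 := lt_trans (by positivity) ha1l
  set x := γ * t with hxdef
  have hx0 : 0 < x := by positivity
  set L := Real.log x with hLdef
  have hxL : Real.exp L = x := Real.exp_log hx0
  have hLlow : 1 / Real.sqrt 2 ≤ L := by
    have hex : Real.exp (1/Real.sqrt 2) ≤ x := by
      rw [hxdef]
      calc Real.exp (1/Real.sqrt 2) = γ * (Real.exp (1/Real.sqrt 2)/γ) := by field_simp
      _ ≤ γ * t := mul_le_mul_of_nonneg_left ht hγ.le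
    calc 1/Real.sqrt 2 = Real.log (Real.exp (1/Real.sqrt 2)) := (Real.log_exp _).symm
    _ ≤ L := Real.log_le_log (Real.exp_pos _) hex
  have hL07 : (0.7:ℝ) ≤ L := by
    have h1 : Real.sqrt 2 ≤ 1.415 := by
      nlinarith [Real.sq_sqrt (by norm_num : (0:ℝ) ≤ 2), Real.sqrt_nonneg 2]
    have h2 : (0.7:ℝ) ≤ 1 / Real.sqrt 2 := by
      rw [le_div_iff₀ (by positivity : (0:ℝ) < Real.sqrt 2)]
      nlinarith
    linarith
  have hL0 : 0 < L := by linarith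
  set E := 2 / 7 * x / L ^ 2 with hEdef
  -- positivity of the a-sequence
  have hapos : ∀ n : ℕ, 0 < a (n + 1) := by
    intro n
    match n with
    | 0 => exact ha10
    | Nat.succ k =>
      rw [han (k + 2) (by omega)]
      have hk2 : (2:ℝ) ≤ ((k + 2 : ℕ) : ℝ) := by push_cast; linarith [Nat.cast_nonneg (α := ℝ) k]
      have hlk : 0 < Real.log ((k + 2 : ℕ) : ℝ) := Real.log_pos (by linarith)
      positivity
  have hupos : ∀ n : ℕ, 0 < a (n + 1) * t := fun n => mul_pos (hapos n) ht0
  -- lower bound on log (a 1 * t)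
  have hat7 : x / 7 < a 1 * t := by
    rw [hxdef]
    calc γ * t / 7 = γ / 7 * t := by ring
    _ < a 1 * t := by exact mul_lt_mul_of_pos_right ha1l ht0
  have hMlb : L - Real.log 7 ≤ Real.log (a 1 * t) := by
    have h1 : Real.log (x / 7) ≤ Real.log (a 1 * t) :=
      Real.log_le_log (by positivity) hat7.le
    rw [Real.log_div hx0.ne' (by norm_num)] at h1
    exact h1
  -- numeric log facts
  have hlog7u : Real.log 7 ≤ 1.95 := by
    have h := WD.le_exp_div (p := 39) (q := 20) (B := (7:ℝ)) (by norm_num) (by norm_num)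
    calc Real.log 7 ≤ Real.log (Real.exp ((39:ℝ)/20)) := Real.log_le_log (by norm_num) (by exact_mod_cast h)
    _ = (39:ℝ)/20 := Real.log_exp _
    _ ≤ 1.95 := by norm_num
  have hlog7l : (1.94:ℝ) ≤ Real.log 7 := by
    have h := WD.exp_div_le (p := 97) (q := 50) (B := (7:ℝ)) (by norm_num) (by norm_num) (by norm_num)
    calc (1.94:ℝ) = (97:ℝ)/50 := by norm_num
    _ = Real.log (Real.exp ((97:ℝ)/50)) := (Real.log_exp _).symm
    _ ≤ Real.log 7 := Real.log_le_log (Real.exp_pos _) (by exact_mod_cast h)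
  have hlog2pi : (1.83:ℝ) ≤ Real.log (2 * Real.pi) := by
    have h628 : (6.28:ℝ) ≤ 2 * Real.pi := by nlinarith [Real.pi_gt_d6]
    have h := WD.exp_div_le (p := 183) (q := 100) (B := (6.28:ℝ)) (by norm_num) (by norm_num)
      (by norm_num)
    calc (1.83:ℝ) = (183:ℝ)/100 := by norm_num
    _ = Real.log (Real.exp ((183:ℝ)/100)) := (Real.log_exp _).symm
    _ ≤ Real.log 6.28 := Real.log_le_log (Real.exp_pos _) (by exact_mod_cast h)
    _ ≤ Real.log (2 * Real.pi) := Real.log_le_log (by norm_num) h628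
  by_cases hz : ∃ n : ℕ, Real.sin (a (n + 1) * t) = 0
  · -- a factor vanishes: w t = 0
    obtain ⟨n0, hn0⟩ := hz
    have hf0 : _root_.sinc (a (n0 + 1) * t) ^ 2 = 0 := by
      unfold _root_.sinc
      rw [if_neg (hupos n0).ne', hn0]
      simp
    have hprod0 : ∏' n : ℕ, _root_.sinc (a (n + 1) * t) ^ 2 = 0 := WD.tprod_zero n0 hf0
    rw [hw t, hprod0, mul_zero]
    refine ⟨le_refl 0, ?_⟩
    have h1 : (0:ℝ) ≤ 2 * (Real.exp 1 * γ) ^ 2 * t := by positivity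
    positivity
  · push_neg at hz
    have hfpos : ∀ n : ℕ, 0 < _root_.sinc (a (n + 1) * t) ^ 2 :=
      fun n => WD.sinc_pos (hupos n).ne' (hz n)
    set g : ℕ → ℝ := fun n => Real.log (_root_.sinc (a (n + 1) * t) ^ 2) with hgdef
    have hgnonpos : ∀ n, g n ≤ 0 :=
      fun n => Real.log_nonpos (hfpos n).le (WD.sinc_sq_le_one _)
    -- summability of g
    have htend : Filter.Tendsto (fun n => a (n + 1)) Filter.atTop (nhds 0) :=
      hsummable.tendsto_atTop_zero
    have hev : ∀ᶠ n in Filter.atTop, a (n + 1) < 1 / t :=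
      htend.eventually_lt_const (by positivity)
    obtain ⟨n₀, hn₀⟩ := Filter.eventually_atTop.1 hev
    have hgsum : Summable g := by
      rw [← summable_nat_add_iff n₀]
      have hb : Summable (fun n => a (n + n₀ + 1) * t) := by
        have h1 := (summable_nat_add_iff (f := fun n => a (n + 1)) n₀).2 hsummable
        exact h1.mul_right t
      have hneg : Summable (fun n => -g (n + n₀)) := by
        apply Summable.of_nonneg_of_le (fun n => neg_nonneg.2 (hgnonpos _)) _ hb
        intro n
        set u := a (n + n₀ + 1) * t with hu
        have hu0 : 0 < u := hupos (n + n₀)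
        have hu1 : u < 1 := by
          have h1 : a (n + n₀ + 1) < 1 / t := hn₀ (n + n₀) (Nat.le_add_left _ _)
          calc u < 1 / t * t := mul_lt_mul_of_pos_right h1 ht0
          _ = 1 := by field_simp
        have hge : 1 - u ^ 2 / 2 ≤ _root_.sinc u ^ 2 := WD.sinc_sq_ge hu0 hu1.le
        have hvpos : (0:ℝ) < 1 - u ^ 2 / 2 := by nlinarith
        have h2 : Real.log (1 - u ^ 2 / 2) ≤ g (n + n₀) :=
          Real.log_le_log hvpos hge
        have h3 : -u ≤ Real.log (1 - u ^ 2 / 2) := by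
          have h4 : Real.log ((1 - u ^ 2 / 2)⁻¹) ≤ (1 - u ^ 2 / 2)⁻¹ - 1 :=
            Real.log_le_sub_one_of_pos (by positivity)
          rw [Real.log_inv] at h4
          have h5 : (1 - u ^ 2 / 2)⁻¹ ≤ 1 + u := by
            rw [inv_eq_one_div, div_le_iff₀ hvpos]
            nlinarith
          linarith
        have : -g (n + n₀) ≤ u := by linarith
        exact this
      have := hneg.neg
      simpa using this
    set S := ∑' n, g n with hSdef
    have hprodexp : ∏' n : ℕ, _root_.sinc (a (n + 1) * t) ^ 2 = Real.exp S := by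
      have h1 : HasProd (Real.exp ∘ g) (Real.exp S) := hgsum.hasSum.rexp
      have h2 : (Real.exp ∘ g) = fun n => _root_.sinc (a (n + 1) * t) ^ 2 :=
        funext fun n => Real.exp_log (hfpos n)
      rw [← h2]
      exact h1.tprod_eq
    have hwt : w t = c * Real.exp S := by rw [hw t, hprodexp]
    have hc0 : 0 < c := lt_trans (by positivity) hcl
    refine ⟨by rw [hwt]; positivity, ?_⟩
    clear hnormalized hsum hw hsummable htend hev hn₀ hz ht hcl ha1u
    -- partial-sum bound
    have hpartial : ∀ s : Finset ℕ, S ≤ ∑ n ∈ s, g n := by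
      intro s
      have h1 : ∑ n ∈ s, -g n ≤ ∑' n, -g n :=
        Summable.sum_le_tsum s (fun i _ => neg_nonneg.2 (hgnonpos i)) hgsum.neg
      rw [tsum_neg, Finset.sum_neg_distrib] at h1
      linarith
    -- reduce to the additive inequality
    suffices hSE : S + E ≤ Real.log (2 * Real.pi) + L + 2 by
      rw [hwt]
      have hexpeq : Real.exp (Real.log (2 * Real.pi) + L + 2 - E)
          = 2 * Real.pi * x * Real.exp 1 ^ 2 * Real.exp (-E) := by
        have e0 : Real.log (2 * Real.pi) + L + 2 - E
            = Real.log (2 * Real.pi) + L + 2 + (-E) := by ring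
        rw [e0, Real.exp_add, Real.exp_add, Real.exp_add,
          Real.exp_log (by positivity), hxL,
          show Real.exp (2:ℝ) = Real.exp 1 ^ 2 by
            rw [show (2:ℝ) = 1 + 1 by norm_num, Real.exp_add]; ring]
      have hstep : c * Real.exp S ≤ γ / Real.pi * Real.exp S :=
        mul_le_mul_of_nonneg_right hcu.le (Real.exp_pos _).le
      have hstep2 : γ / Real.pi * Real.exp S
          ≤ γ / Real.pi * (2 * Real.pi * x * Real.exp 1 ^ 2 * Real.exp (-E)) := by
        apply mul_le_mul_of_nonneg_left _ (by positivity)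
        rw [← hexpeq]
        exact Real.exp_le_exp.2 (by linarith)
      have heq : γ / Real.pi * (2 * Real.pi * x * Real.exp 1 ^ 2 * Real.exp (-E))
          = 2 * (Real.exp 1 * γ) ^ 2 * t * Real.exp (-E) := by
        rw [hxdef]
        have hπ' : Real.pi ≠ 0 := ne_of_gt hπ
        field_simp
      calc c * Real.exp S ≤ γ / Real.pi * Real.exp S := hstep
      _ ≤ γ / Real.pi * (2 * Real.pi * x * Real.exp 1 ^ 2 * Real.exp (-E)) := hstep2
      _ = 2 * (Real.exp 1 * γ) ^ 2 * t * Real.exp (-E) := heq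
    by_cases hLsmall : L ≤ 17 / 2
    · -- small-L branch : one factor suffices
      have h0 : S ≤ g 0 := by
        have := hpartial {0}
        simpa using this
      have hga : g 0 ≤ -2 * L + 2 * Real.log 7 := by
        have hu := hupos 0
        have h1 : _root_.sinc (a 1 * t) ^ 2 ≤ 1 / (a 1 * t) ^ 2 := WD.sinc_sq_le (hupos 0).ne'
        have h2 : g 0 ≤ Real.log (1 / (a 1 * t) ^ 2) :=
          Real.log_le_log (hfpos 0) (by exact_mod_cast h1)
        rw [one_div, Real.log_inv, Real.log_pow] at h2
        push_cast at h2
        linarith [hMlb, h2]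
      have hE3L : E ≤ 3 * L - 7 / 100 := by
        rw [hEdef]
        rw [div_le_iff₀ (by positivity : (0:ℝ) < L ^ 2)]
        linarith [WD.small_case hxL hL07 hLsmall]
      linarith [h0, hga, hE3L, hlog7u, hlog2pi]
    · -- large-L branch
      push_neg at hLsmall
      have hlam_l : (2.12:ℝ) ≤ Real.log L := by
        have h1 := WD.exp_div_le (p := 53) (q := 25) (B := (8.5:ℝ)) (by norm_num) (by norm_num)
          (by norm_num)
        calc (2.12:ℝ) = Real.log (Real.exp (((53:ℕ):ℝ)/((25:ℕ):ℝ))) := by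
              rw [Real.log_exp]; norm_num
        _ ≤ Real.log (8.5:ℝ) := Real.log_le_log (Real.exp_pos _) h1
        _ ≤ Real.log L := Real.log_le_log (by norm_num) (by linarith)
      have hlam_u : Real.log L ≤ L * (100/271) := by
        have h1 : Real.log (L / Real.exp 1) ≤ L / Real.exp 1 - 1 :=
          Real.log_le_sub_one_of_pos (by positivity)
        rw [Real.log_div hL0.ne' (Real.exp_ne_zero 1), Real.log_exp] at h1
        have h2 : L / Real.exp 1 ≤ L * (100/271) := by
          rw [div_le_iff₀ (Real.exp_pos 1)]
          have h3 : L * (100/271) * 2.71 ≤ L * (100/271) * Real.exp 1 := by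
            apply mul_le_mul_of_nonneg_left
            · linarith [Real.exp_one_gt_d9]
            · have := mul_nonneg hL0.le (by norm_num : (0:ℝ) ≤ 100/271)
              linarith
          linarith
        linarith
      have hcase : (2.2:ℝ) ≤ Real.log L ∨ L ≤ 9.05 := by
        by_cases hlc : (2.2:ℝ) ≤ Real.log L
        · exact Or.inl hlc
        · right
          push_neg at hlc
          have h1 : L = Real.exp (Real.log L) := (Real.exp_log hL0).symm
          have h2 := WD.exp_div_le (p := 11) (q := 5) (B := (9.05:ℝ)) (by norm_num) (by norm_num)
            (by norm_num)
          calc L = Real.exp (Real.log L) := h1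
          _ ≤ Real.exp (((11:ℕ):ℝ)/((5:ℕ):ℝ)) := Real.exp_le_exp.2 (by push_cast; linarith)
          _ ≤ 9.05 := h2
      have hxL4 : (17/20)*L^4 ≤ x := by
        have hu0 : (0:ℝ) ≤ L - 17/2 := by linarith
        have e1 : (1 + (L - 17/2)/4)^4 ≤ Real.exp (L - 17/2) := by
          have h := Real.add_one_le_exp ((L - 17/2)/4)
          have h2 : (1 + (L - 17/2)/4)^4 ≤ Real.exp ((L - 17/2)/4)^4 :=
            pow_le_pow_left₀ (by linarith) (by linarith) 4
          have h3 : Real.exp ((L - 17/2)/4)^4 = Real.exp (L - 17/2) := by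
            rw [← Real.exp_nat_mul]
            congr 1
            push_cast
            ring
          linarith [h2, h3.le, h3.ge]
        have e2 : (4914:ℝ) ≤ Real.exp (17/2) := by
          have h := WD.le_exp_div (p := 17) (q := 2) (B := (4914:ℝ)) (by norm_num) (by norm_num)
          calc (4914:ℝ) ≤ Real.exp (((17:ℕ):ℝ)/((2:ℕ):ℝ)) := h
          _ = Real.exp (17/2) := by norm_num
        have e3 : Real.exp (17/2) * Real.exp (L - 17/2) = x := by
          rw [← Real.exp_add, show (17:ℝ)/2 + (L - 17/2) = L by ring]
          exact hxL
        have hc1 : 17/2 + (L - 17/2) ≤ (17/2)*(1 + (L - 17/2)/4) := by linarith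
        have hc2 : (17/2 + (L - 17/2))^4 ≤ ((17/2)*(1 + (L - 17/2)/4))^4 :=
          pow_le_pow_left₀ (by linarith) hc1 4
        have hp : (0:ℝ) ≤ (1 + (L - 17/2)/4)^4 := by positivity
        calc (17/20)*L^4 = (17/20)*(17/2 + (L - 17/2))^4 := by ring
        _ ≤ (17/20)*(((17/2)*(1 + (L - 17/2)/4))^4) := by linarith [hc2]
        _ = ((17/20)*(17/2)^4)*(1 + (L - 17/2)/4)^4 := by ring
        _ ≤ 4914*(1 + (L - 17/2)/4)^4 := mul_le_mul_of_nonneg_right (by norm_num) hp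
        _ ≤ Real.exp (17/2) * Real.exp (L - 17/2) :=
            mul_le_mul e2 e1 hp (Real.exp_pos _).le
        _ = x := e3
      set nu := x/(7*L^2) with hnudef
      have hL2pos : (0:ℝ) < 7*L^2 := by positivity
      have hnu : 17/140 * L^2 ≤ nu := by
        rw [hnudef, le_div_iff₀ hL2pos]
        linarith [hxL4]
      have hnu0 : (0:ℝ) < nu := by rw [hnudef]; positivity
      have hLsq : (72.25:ℝ) ≤ L^2 := by
        have h1 : (8.5:ℝ)*8.5 ≤ L*L := by
          apply mul_le_mul (by linarith) (by linarith) (by norm_num) (by linarith)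
        have h2 : L^2 = L*L := pow_two L
        linarith
      have hnu8 : (8:ℝ) ≤ nu := by linarith [hnu, hLsq]
      set Nn := ⌈nu⌉₊ with hNdef
      have hNge : nu ≤ (Nn:ℝ) := Nat.le_ceil nu
      have hNle : (Nn:ℝ) ≤ nu + 1 := le_of_lt (Nat.ceil_lt_add_one hnu0.le)
      have hN2 : 2 ≤ Nn := by
        have h1 : (2:ℝ) ≤ (Nn:ℝ) := by linarith
        exact_mod_cast h1
      set mN := Nn - 1 with hmNdef
      have hmcast : (mN:ℝ) = (Nn:ℝ) - 1 := by
        rw [hmNdef, Nat.cast_sub (by omega : 1 ≤ Nn)]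
        norm_num
      have hmN1 : (mN:ℝ) + 1 = (Nn:ℝ) := by rw [hmcast]; ring
      -- the partial sum bound
      set lM := Real.log (a 1 * t) with hlMdef
      have hS1 : S ≤ ∑ n ∈ (Finset.range mN).image (fun i => 1 + i), g n := hpartial _
      have hS2 : ∑ n ∈ (Finset.range mN).image (fun i => 1 + i), g n
          = ∑ i ∈ Finset.range mN, g (1 + i) := by
        apply Finset.sum_image
        intro a _ b _ h
        simp only at h
        omega
      have hterm : ∀ i ∈ Finset.range mN, g (1 + i) ≤
          2*Real.log ((i:ℝ)+2) + 4*Real.log (Real.log ((i:ℝ)+2)) - 2*lM := by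
        intro i _
        have hidx : 1 + i + 1 = i + 2 := by omega
        have hai : a (i + 2) = a 1 / (((i + 2 : ℕ):ℝ) * Real.log ((i + 2 : ℕ):ℝ) ^ 2) :=
          han (i+2) (by omega)
        have hk2 : (2:ℝ) ≤ ((i + 2 : ℕ):ℝ) := by push_cast; linarith [Nat.cast_nonneg (α := ℝ) i]
        have hkpos : (0:ℝ) < ((i + 2:ℕ):ℝ) := by linarith
        have hlk : 0 < Real.log ((i + 2:ℕ):ℝ) := Real.log_pos (by linarith)
        have hupos' : 0 < a (i+2) * t := by
          have h := hupos (1 + i)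
          rwa [hidx] at h
        have hg : g (1 + i) = Real.log (_root_.sinc (a (i + 2) * t) ^ 2) := by
          simp only [hgdef]
          exact congrArg (fun k : ℕ => Real.log (_root_.sinc (a k * t) ^ 2)) hidx
        have hfpos' : 0 < _root_.sinc (a (i + 2) * t) ^ 2 := by
          have h := hfpos (1 + i)
          rwa [hidx] at h
        have hb : _root_.sinc (a (i+2) * t)^2 ≤ 1/(a (i+2)*t)^2 := WD.sinc_sq_le hupos'.ne'
        have h3 : g (1 + i) ≤ Real.log (1/(a (i+2)*t)^2) := by
          rw [hg]
          exact Real.log_le_log hfpos' hb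
        have hu : a (i + 2) * t = (a 1 * t) / (((i+2:ℕ):ℝ) * Real.log ((i+2:ℕ):ℝ) ^ 2) := by
          rw [hai]
          field_simp
        rw [one_div, Real.log_inv, Real.log_pow, hu,
          Real.log_div (by positivity) (by positivity),
          Real.log_mul hkpos.ne' (by positivity), Real.log_pow] at h3
        rw [hlMdef]
        push_cast at h3 ⊢
        linarith [h3]
      have hS3 : S ≤ 2*(∑ i ∈ Finset.range mN, Real.log ((i:ℝ)+2))
          + 4*(∑ i ∈ Finset.range mN, Real.log (Real.log ((i:ℝ)+2))) - 2*(mN:ℝ)*lM := by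
        calc S ≤ ∑ i ∈ Finset.range mN, g (1 + i) := by rw [← hS2]; exact hS1
        _ ≤ ∑ i ∈ Finset.range mN,
            (2*Real.log ((i:ℝ)+2) + 4*Real.log (Real.log ((i:ℝ)+2)) - 2*lM) :=
          Finset.sum_le_sum hterm
        _ = _ := by
          rw [Finset.sum_sub_distrib, Finset.sum_add_distrib, ← Finset.mul_sum, ← Finset.mul_sum,
            Finset.sum_const, Finset.card_range, nsmul_eq_mul]
          ring
      have hST := WD.sum_log_le mN
      have hLL := WD.sum_loglog_le mN
      set Lg := Real.log ((mN:ℝ) + 1) with hLgdef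
      set LLg := Real.log Lg with hLLgdef
      have hS4 : S ≤ 2*((mN:ℝ)+1)*Lg - 2*(mN:ℝ) + 2*Lg + 4*(mN:ℝ)*LLg - 2*(mN:ℝ)*lM := by
        linarith [hS3, hST, hLL]
      have hE2 : E ≤ 2*(mN:ℝ) + 2 := by
        have hEnu : E = 2*nu := by rw [hEdef, hnudef]; ring
        rw [hEnu]
        linarith [hNge, hmN1]
      have hm1 : nu - 1 ≤ (mN:ℝ) := by linarith [hNge, hmN1]
      have hLg0 : 0 < Lg := by
        rw [hLgdef]
        apply Real.log_pos
        have : (2:ℝ) ≤ (Nn:ℝ) := by exact_mod_cast hN2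
        linarith [hmN1]
      have hlam := hLdef
      have hLg_ub : Lg ≤ L - Real.log 7 - 2*Real.log L + 1/nu := by
        have hN0 : (0:ℝ) < (mN:ℝ) + 1 := by linarith [hLg0, hmN1, hNge, hnu0]
        have h1 : Lg ≤ Real.log (nu + 1) := by
          rw [hLgdef, hmN1]
          exact Real.log_le_log (by linarith) hNle
        have h2 : Real.log (nu + 1) ≤ Real.log nu + 1/nu := by
          have h3 : Real.log ((nu+1)/nu) ≤ (nu+1)/nu - 1 :=
            Real.log_le_sub_one_of_pos (by positivity)
          rw [Real.log_div (by positivity) hnu0.ne'] at h3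
          have h4 : (nu+1)/nu - 1 = 1/nu := by field_simp; ring
          linarith
        have h5a : Real.log (7*L^2) = Real.log 7 + 2*Real.log L := by
          rw [Real.log_mul (by norm_num) (pow_ne_zero 2 hL0.ne'), Real.log_pow]
          push_cast
          ring
        have h5 : Real.log nu = L - Real.log 7 - 2*Real.log L := by
          rw [hnudef, Real.log_div hx0.ne' (ne_of_gt hL2pos), h5a, ← hLdef]
          ring
        linarith
      have hLLg_ub : LLg ≤ Real.log L - (2*Real.log L + Real.log 7 - 1/nu)/L := by
        have hB0 : 0 < L - Real.log 7 - 2*Real.log L + 1/nu := lt_of_lt_of_le hLg0 hLg_ub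
        have h1 : LLg ≤ Real.log (L - Real.log 7 - 2*Real.log L + 1/nu) := by
          rw [hLLgdef]
          exact Real.log_le_log hLg0 hLg_ub
        have h3 : Real.log ((L - Real.log 7 - 2*Real.log L + 1/nu)/L)
            ≤ (L - Real.log 7 - 2*Real.log L + 1/nu)/L - 1 :=
          Real.log_le_sub_one_of_pos (by positivity)
        rw [Real.log_div hB0.ne' hL0.ne'] at h3
        have h4 : (L - Real.log 7 - 2*Real.log L + 1/nu)/L - 1
            = -((2*Real.log L + Real.log 7 - 1/nu)/L) := by
          field_simp
          ring
        linarith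
      have hfinal := WD.hard_final hLsmall.le hlog7l hlog7u hlam_l hlam_u hcase hnu hm1 hE2
        hLg0 hLg_ub hLLg_ub hS4 hMlb
      linarith [hfinal, hlog2pi]
end

section
/- Let H₁, H₂ be Hilbert spaces with H₂ finite-dimensional, ε ≥ 0, and A ∈ B(H₁ ⊗ H₂) such that ‖[A, 1 ⊗ B]‖ ≤ ε‖B‖ for all B ∈ B(H₂). Then A' := (dim H₂)^{-1} Tr_{H₂} A ∈ B(H₁) satisfies ‖A' ⊗ 1 − A‖ ≤ ε. -/
open scoped ComplexInnerProductSpace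

lemma zmod_sum_pow_val {d : ℕ} [NeZero d] (x : ℂ) :
    ∑ c : ZMod d, x ^ (c.val) = ∑ i ∈ Finset.range d, x ^ i := by
  apply Finset.sum_bij (fun (c : ZMod d) _ => c.val)
  · intro c _; exact Finset.mem_range.2 (ZMod.val_lt c)
  · intro a _ b _ h; exact ZMod.val_injective d h
  · intro i hi; exact ⟨(i : ZMod d), Finset.mem_univ _,
      ZMod.val_cast_of_lt (Finset.mem_range.1 hi)⟩
  · intro c _; rfl

lemma pow_val_mod {d : ℕ} {ζ : ℂ} (h1 : ζ ^ d = 1) (n : ℕ) : ζ ^ (n % d) = ζ ^ n := by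
  conv_rhs => rw [← Nat.div_add_mod n d]
  rw [pow_add, pow_mul, h1, one_pow, one_mul]

lemma zmod_pow_val_eq {d : ℕ} [NeZero d] {ζ : ℂ} (h1 : ζ ^ d = 1)
    {a b : ℕ} (h : a ≡ b [MOD d]) : ζ ^ a = ζ ^ b := by
  rw [← pow_val_mod h1 a, ← pow_val_mod h1 b]
  unfold Nat.ModEq at h
  rw [h]

lemma char_sum {d : ℕ} [NeZero d] (m : ZMod d) :
    ∑ c : ZMod d, (Complex.exp (2 * Real.pi * Complex.I / d)) ^ (c * m).val
      = if m = 0 then (d : ℂ) else 0 := by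
  set ζ := Complex.exp (2 * Real.pi * Complex.I / d) with hζdef
  have hd : (d : ℕ) ≠ 0 := NeZero.ne d
  have hζ : IsPrimitiveRoot ζ d := Complex.isPrimitiveRoot_exp d hd
  have step : ∀ c : ZMod d, ζ ^ (c * m).val = (ζ ^ m.val) ^ c.val := by
    intro c
    rw [← pow_mul]
    apply zmod_pow_val_eq hζ.pow_eq_one
    rw [ZMod.val_mul]
    calc c.val * m.val % d ≡ c.val * m.val [MOD d] := Nat.mod_modEq _ _
      _ = m.val * c.val := Nat.mul_comm _ _
  rw [Finset.sum_congr rfl (fun c _ => step c), zmod_sum_pow_val]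
  by_cases hm : m = 0
  · simp [hm]
  · rw [if_neg hm]
    have h1 : ζ ^ m.val ≠ 1 := by
      apply hζ.pow_ne_one_of_pos_of_lt _ (ZMod.val_lt m)
      exact (fun h => hm (by rwa [← ZMod.val_eq_zero]))
    rw [geom_sum_eq h1]
    have : (ζ ^ m.val) ^ d = 1 := by
      rw [← pow_mul, mul_comm, pow_mul, hζ.pow_eq_one, one_pow]
    simp [this]

set_option maxHeartbeats 2000000 in
/-- Let `H₁, H₂` be Hilbert spaces with `H₂` finite-dimensional, realized in a Hilbert
tensor product `H` via a bounded bilinear map `tmul` whose image spans a dense subspace and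
which multiplies inner products.  If `A ∈ B(H₁⊗H₂)` satisfies `‖[A, 1⊗B]‖ ≤ ε‖B‖` for all
`B ∈ B(H₂)`, then the normalized partial trace `A' = (dim H₂)⁻¹ Tr_{H₂} A` (characterized
by its matrix elements w.r.t. an orthonormal basis of `H₂`) satisfies `‖A'⊗1 − A‖ ≤ ε`. -/
theorem normalized_partial_trace_close
    {H₁ H₂ H : Type*}
    [NormedAddCommGroup H₁] [InnerProductSpace ℂ H₁] [CompleteSpace H₁]
    [NormedAddCommGroup H₂] [InnerProductSpace ℂ H₂] [CompleteSpace H₂]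
    [NormedAddCommGroup H] [InnerProductSpace ℂ H] [CompleteSpace H]
    [FiniteDimensional ℂ H₂]
    (tmul : H₁ →L[ℂ] H₂ →L[ℂ] H)
    (htmul : ∀ (x x' : H₁) (y y' : H₂),
      (inner ℂ (tmul x y) (tmul x' y') : ℂ) = (inner ℂ x x' : ℂ) * (inner ℂ y y' : ℂ))
    (hdense : Dense (Submodule.span ℂ {z : H | ∃ x y, z = tmul x y} : Set H))
    (ε : ℝ) (hε : 0 ≤ ε)
    (A : H →L[ℂ] H)
    (hcomm : ∀ (B : H₂ →L[ℂ] H₂) (Bt : H →L[ℂ] H),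
      (∀ x y, Bt (tmul x y) = tmul x (B y)) →
      ‖A ∘L Bt - Bt ∘L A‖ ≤ ε * ‖B‖)
    {ι : Type*} [Fintype ι] (b : OrthonormalBasis ι ℂ H₂)
    (A' : H₁ →L[ℂ] H₁)
    (hA' : ∀ φ ψ : H₁, (inner ℂ φ (A' ψ) : ℂ) =
      ((Module.finrank ℂ H₂ : ℂ))⁻¹ *
        ∑ i, (inner ℂ (tmul φ (b i)) (A (tmul ψ (b i))) : ℂ))
    (At : H →L[ℂ] H)
    (hAt : ∀ x y, At (tmul x y) = tmul (A' x) y) :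
    ‖At - A‖ ≤ ε := by
  classical
  rcases isEmpty_or_nonempty ι with hι | hι
  · -- degenerate case: H₂ = 0, hence H = 0
    haveI : Subsingleton H₂ := b.repr.toLinearEquiv.toEquiv.subsingleton
    have hz : ∀ z : H, z = 0 := by
      have hsub : {z : H | ∃ x y, z = tmul x y} ⊆ {0} := by
        rintro z ⟨x, y, rfl⟩
        have : y = (0 : H₂) := Subsingleton.elim _ _
        simp [this]
      have hspan : (Submodule.span ℂ {z : H | ∃ x y, z = tmul x y}) ≤ ⊥ := by
        rw [← Submodule.span_eq (⊥ : Submodule ℂ H)]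
        exact Submodule.span_mono (hsub.trans (by simp))
      intro z
      have hdense' : Dense ({(0:H)} : Set H) := by
        apply hdense.mono
        intro w hw
        simpa using hspan hw
      have := hdense'.closure_eq
      rw [closure_singleton] at this
      have : z ∈ ({(0:H)} : Set H) := this ▸ Set.mem_univ z
      simpa using this
    have h0 : At - A = 0 := by
      ext z
      simp [hz z]
    rw [h0]
    simpa using hε
  · -- main case
    set d : ℕ := Fintype.card ι with hd
    haveI : NeZero d := ⟨Fintype.card_ne_zero⟩
    set e : ι ≃ ZMod d := Fintype.equivOfCardEq (by simp [ZMod.card, hd]) with he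
    set b' : OrthonormalBasis (ZMod d) ℂ H₂ := b.reindex e with hb'
    set ζ : ℂ := Complex.exp (2 * Real.pi * Complex.I / d) with hζdef
    set χ : ZMod d → ℂ := fun m => ζ ^ m.val with hχdef
    have hζ1 : ζ ^ d = 1 := (Complex.isPrimitiveRoot_exp d (NeZero.ne d)).pow_eq_one
    have hχ_add : ∀ m n : ZMod d, χ (m + n) = χ m * χ n := by
      intro m n
      show ζ ^ (m+n).val = ζ ^ m.val * ζ ^ n.val
      rw [← pow_add]
      apply zmod_pow_val_eq hζ1
      rw [ZMod.val_add]
      exact Nat.mod_modEq _ _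
    have hχ_zero : χ 0 = 1 := by simp [hχdef]
    have hχ_norm : ∀ m, ‖χ m‖ = 1 := by
      intro m
      have : ‖ζ‖ = 1 := by
        have : 2 * (Real.pi : ℂ) * Complex.I / d = ((2 * Real.pi / d : ℝ) : ℂ) * Complex.I := by
          push_cast; ring
        rw [hζdef, this, Complex.norm_exp_ofReal_mul_I]
      rw [hχdef]
      simp [norm_pow, this]
    have hχ_conj : ∀ m, (starRingEnd ℂ) (χ m) * χ m = 1 := by
      intro m
      rw [RCLike.conj_mul]
      norm_cast
      rw [hχ_norm]
      norm_num
    -- isometries V j : H₁ → H, x ↦ x ⊗ b' j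
    set V : ZMod d → H₁ →L[ℂ] H := fun j => tmul.flip (b' j) with hVdef
    set Vs : ZMod d → H →L[ℂ] H₁ := fun j => ContinuousLinearMap.adjoint (V j) with hVsdef
    have hV : ∀ j x, V j x = tmul x (b' j) := fun _ _ => rfl
    have horth : ∀ i j : ZMod d, (inner ℂ (b' i) (b' j) : ℂ) = if i = j then 1 else 0 := by
      intro i j
      rcases eq_or_ne i j with h | h
      · simp [h, b'.orthonormal.1 j, @inner_self_eq_norm_sq_to_K ℂ]
      · simp [h, b'.orthonormal.2 h]
    have hVs : ∀ j (x : H₁) (y : H₂), Vs j (tmul x y) = (inner ℂ (b' j) y : ℂ) • x := by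
      intro j x y
      apply ext_inner_left ℂ
      intro φ
      rw [hVsdef]
      rw [ContinuousLinearMap.adjoint_inner_right]
      rw [hV, htmul, inner_smul_right]
      ring
    -- Weyl operators
    set Wop : ZMod d → ZMod d → H₂ →L[ℂ] H₂ := fun a c =>
      ∑ j, χ (c * j) • ((innerSL ℂ (b' j)).smulRight (b' (j + a))) with hWopdef
    set Wt : ZMod d → ZMod d → H →L[ℂ] H := fun a c =>
      ∑ j, χ (c * j) • ((V (j + a)) ∘L (Vs j)) with hWtdef
    set M : ZMod d → ZMod d → H →L[ℂ] H := fun a c =>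
      ∑ j, χ (-(c * j)) • ((V j) ∘L (Vs (j + a))) with hMdef
    have hWop_apply : ∀ a c y, Wop a c y
        = ∑ j, χ (c * j) • ((inner ℂ (b' j) y : ℂ) • b' (j + a)) := by
      intro a c y
      rw [hWopdef]
      simp [ContinuousLinearMap.sum_apply]
    have hWt_apply : ∀ a c (x : H₁) (y : H₂), Wt a c (tmul x y) = tmul x (Wop a c y) := by
      intro a c x y
      rw [hWtdef, hWop_apply]
      simp only [ContinuousLinearMap.sum_apply, ContinuousLinearMap.smul_apply,
        ContinuousLinearMap.comp_apply, hVs, map_sum, map_smul, hV]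
    have hM_apply : ∀ a c (x : H₁) (y : H₂), M a c (tmul x y)
        = ∑ j, χ (-(c * j)) • ((inner ℂ (b' (j + a)) y : ℂ) • tmul x (b' j)) := by
      intro a c x y
      rw [hMdef]
      simp only [ContinuousLinearMap.sum_apply, ContinuousLinearMap.smul_apply,
        ContinuousLinearMap.comp_apply, hVs, map_smul, hV]
    have hχ_inv : ∀ m, χ (-m) * χ m = 1 := by
      intro m
      rw [← hχ_add]
      simp [hχ_zero]
    have hext : ∀ (f g : H →L[ℂ] H), (∀ x y, f (tmul x y) = g (tmul x y)) → f = g := by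
      intro f g h
      apply ContinuousLinearMap.ext_on hdense
      rintro z ⟨x, y, rfl⟩
      exact h x y
    have hrepr : ∀ (x : H₁) (y : H₂),
        ∑ j, (inner ℂ (b' j) y : ℂ) • tmul x (b' j) = tmul x y := by
      intro x y
      have : ∑ j, (inner ℂ (b' j) y : ℂ) • tmul x (b' j)
          = tmul x (∑ j, (inner ℂ (b' j) y : ℂ) • b' j) := by
        rw [map_sum]
        simp only [map_smul]
      rw [this, b'.sum_repr']
    have hcoef : ∀ a c j (y : H₂),
        (inner ℂ (b' (j + a)) (Wop a c y) : ℂ) = χ (c * j) * (inner ℂ (b' j) y : ℂ) := by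
      intro a c j y
      rw [hWop_apply, inner_sum]
      rw [Finset.sum_eq_single j]
      · rw [inner_smul_right, inner_smul_right, horth, if_pos rfl]
        ring
      · intro k _ hk
        rw [inner_smul_right, inner_smul_right, horth,
          if_neg (fun h => hk (add_right_cancel h).symm)]
        simp
      · simp
    have hMWt : ∀ a c, (M a c) ∘L (Wt a c) = ContinuousLinearMap.id ℂ H := by
      intro a c
      apply hext
      intro x y
      rw [ContinuousLinearMap.comp_apply, hWt_apply, hM_apply]
      simp only [hcoef, smul_smul]
      have : ∀ j : ZMod d, χ (-(c * j)) * (χ (c * j) * (inner ℂ (b' j) y : ℂ))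
          = (inner ℂ (b' j) y : ℂ) := by
        intro j
        rw [← mul_assoc, hχ_inv, one_mul]
      simp only [this]
      rw [hrepr]
      rfl
    have hP : (∑ j, (V j) ∘L (Vs j)) = ContinuousLinearMap.id ℂ H := by
      apply hext
      intro x y
      rw [ContinuousLinearMap.sum_apply]
      simp only [ContinuousLinearMap.comp_apply, hVs, map_smul,
        ContinuousLinearMap.smul_apply, hV]
      rw [hrepr]
      rfl
    have hsumVs : ∀ z : H, ∑ j, (inner ℂ (Vs j z) (Vs j z) : ℂ) = (inner ℂ z z : ℂ) := by
      intro z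
      have h1 : (inner ℂ z z : ℂ) = inner ℂ z ((∑ j, (V j) ∘L (Vs j)) z) := by rw [hP]; rfl
      rw [h1, ContinuousLinearMap.sum_apply, inner_sum]
      apply Finset.sum_congr rfl
      intro j _
      rw [ContinuousLinearMap.comp_apply]
      exact ContinuousLinearMap.adjoint_inner_left (V j) (Vs j z) z
    have hVinner : ∀ (j k : ZMod d) (u w : H₁),
        (inner ℂ ((V j) u) ((V k) w) : ℂ) = if j = k then (inner ℂ u w : ℂ) else 0 := by
      intro j k u w
      rw [hV, hV, htmul, horth]
      split_ifs <;> simp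
    have hMnorm : ∀ a c (z : H), ‖M a c z‖ = ‖z‖ := by
      intro a c z
      have hinner : (inner ℂ (M a c z) (M a c z) : ℂ) = (inner ℂ z z : ℂ) := by
        calc (inner ℂ (M a c z) (M a c z) : ℂ)
            = ∑ j, ∑ k, (starRingEnd ℂ) (χ (-(c*j))) * (χ (-(c*k)) *
                (inner ℂ ((V j) (Vs (j+a) z)) ((V k) (Vs (k+a) z)) : ℂ)) := by
              simp only [hMdef, ContinuousLinearMap.sum_apply,
                ContinuousLinearMap.smul_apply, ContinuousLinearMap.comp_apply,
                sum_inner, inner_sum, inner_smul_left, inner_smul_right]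
              simp only [Finset.mul_sum]
              rw [Finset.sum_comm]
              refine Finset.sum_congr rfl fun k _ => Finset.sum_congr rfl fun j _ => by ring
          _ = ∑ j, (inner ℂ (Vs (j+a) z) (Vs (j+a) z) : ℂ) := by
              apply Finset.sum_congr rfl
              intro j _
              rw [Finset.sum_eq_single j]
              · rw [hVinner, if_pos rfl, ← mul_assoc, hχ_conj, one_mul]
              · intro k _ hk
                rw [hVinner, if_neg (fun h => hk h.symm)]
                ring
              · simp
          _ = ∑ j, (inner ℂ (Vs j z) (Vs j z) : ℂ) :=
              Fintype.sum_equiv (Equiv.addRight a) _ _ (fun j => rfl)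
          _ = (inner ℂ z z : ℂ) := hsumVs z
      have h2 : ‖M a c z‖^2 = ‖z‖^2 := by
        rw [← @inner_self_eq_norm_sq ℂ, ← @inner_self_eq_norm_sq ℂ]
        rw [hinner]
      rw [← Real.sqrt_sq (norm_nonneg (M a c z)), ← Real.sqrt_sq (norm_nonneg z), h2]
    have hMnormle : ∀ a c, ‖M a c‖ ≤ 1 := by
      intro a c
      apply ContinuousLinearMap.opNorm_le_bound _ zero_le_one
      intro z
      rw [hMnorm, one_mul]
    have hynorm : ∀ y : H₂, (inner ℂ y y : ℂ)
        = ∑ j, (starRingEnd ℂ) (inner ℂ (b' j) y : ℂ) * (inner ℂ (b' j) y : ℂ) := by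
      intro y
      have hy : (inner ℂ y y : ℂ) = inner ℂ (∑ j, (inner ℂ (b' j) y : ℂ) • b' j) y := by
        rw [b'.sum_repr']
      rw [hy, sum_inner]
      apply Finset.sum_congr rfl
      intro j _
      rw [inner_smul_left]
    have hWnorm : ∀ a c, ‖Wop a c‖ ≤ 1 := by
      intro a c
      apply ContinuousLinearMap.opNorm_le_bound _ zero_le_one
      intro y
      rw [one_mul]
      have hinner : (inner ℂ (Wop a c y) (Wop a c y) : ℂ) = (inner ℂ y y : ℂ) := by
        calc (inner ℂ (Wop a c y) (Wop a c y) : ℂ)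
            = ∑ j, ∑ k, (starRingEnd ℂ) (χ (c*j)) * ((starRingEnd ℂ) (inner ℂ (b' j) y : ℂ) *
                (χ (c*k) * ((inner ℂ (b' k) y : ℂ) * (inner ℂ (b' (j+a)) (b' (k+a)) : ℂ)))) := by
              simp only [hWop_apply, sum_inner, inner_sum, inner_smul_left, inner_smul_right]
              simp only [Finset.mul_sum]
              rw [Finset.sum_comm]
              refine Finset.sum_congr rfl fun k _ => Finset.sum_congr rfl fun j _ => by ring
          _ = ∑ j, (starRingEnd ℂ) (inner ℂ (b' j) y : ℂ) * (inner ℂ (b' j) y : ℂ) := by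
              apply Finset.sum_congr rfl
              intro j _
              rw [Finset.sum_eq_single j]
              · rw [horth, if_pos rfl]
                calc (starRingEnd ℂ) (χ (c*j)) * ((starRingEnd ℂ) (inner ℂ (b' j) y : ℂ) *
                      (χ (c*j) * ((inner ℂ (b' j) y : ℂ) * 1)))
                    = ((starRingEnd ℂ) (χ (c*j)) * χ (c*j)) *
                      ((starRingEnd ℂ) (inner ℂ (b' j) y : ℂ) * (inner ℂ (b' j) y : ℂ)) := by ring
                  _ = (starRingEnd ℂ) (inner ℂ (b' j) y : ℂ) * (inner ℂ (b' j) y : ℂ) := by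
                      rw [hχ_conj, one_mul]
              · intro k _ hk
                rw [horth, if_neg (fun h => hk (add_right_cancel h).symm)]
                ring
              · simp
          _ = (inner ℂ y y : ℂ) := (hynorm y).symm
      have h2 : ‖Wop a c y‖^2 = ‖y‖^2 := by
        rw [← @inner_self_eq_norm_sq ℂ, ← @inner_self_eq_norm_sq ℂ]
        rw [hinner]
      rw [← Real.sqrt_sq (norm_nonneg (Wop a c y)), ← Real.sqrt_sq (norm_nonneg y), h2]
    have hdC : (d : ℂ) ≠ 0 := Nat.cast_ne_zero.2 (NeZero.ne d)
    have hfin : ((Module.finrank ℂ H₂ : ℕ) : ℂ) = (d : ℂ) := by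
      rw [Module.finrank_eq_card_basis b.toBasis]
    have htrace : ∀ x : H₁,
        ∑ i, Vs i (A (tmul x (b' i))) = (d : ℂ) • A' x := by
      intro x
      apply ext_inner_left ℂ
      intro φ
      rw [inner_sum, inner_smul_right]
      have hterm : ∀ i : ZMod d, (inner ℂ φ (Vs i (A (tmul x (b' i)))) : ℂ)
          = (inner ℂ (tmul φ (b' i)) (A (tmul x (b' i))) : ℂ) := by
        intro i
        have := ContinuousLinearMap.adjoint_inner_right (V i) φ (A (tmul x (b' i)))
        rw [hV] at this
        exact this
      rw [Finset.sum_congr rfl (fun i _ => hterm i)]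
      rw [hA' φ x, hfin, ← mul_assoc, mul_inv_cancel₀ hdC, one_mul]
      apply Fintype.sum_equiv e.symm
      intro j
      rw [hb', OrthonormalBasis.reindex_apply]
    have hchar : ∀ m : ZMod d, ∑ c, χ (c * m) = if m = 0 then (d : ℂ) else 0 := by
      intro m
      simp only [hχdef, hζdef]
      exact char_sum m
    have hMw : ∀ a c (w : H), M a c w = ∑ k, χ (-(c*k)) • (V k) (Vs (k+a) w) := by
      intro a c w
      rw [hMdef]
      simp [ContinuousLinearMap.sum_apply]
    have step1 : ∀ a c (x : H₁) (y : H₂), M a c (A (Wt a c (tmul x y)))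
        = ∑ k, ∑ j, (χ (c * (j - k)) * (inner ℂ (b' j) y : ℂ)) •
            (V k) (Vs (k+a) (A (tmul x (b' (j+a))))) := by
      intro a c x y
      rw [hWt_apply, hWop_apply]
      simp only [map_sum, map_smul]
      simp only [hMw]
      simp only [Finset.smul_sum]
      rw [Finset.sum_comm]
      refine Finset.sum_congr rfl fun k _ => Finset.sum_congr rfl fun j _ => ?_
      simp only [smul_smul]
      congr 1
      rw [show c * (j - k) = c * j + (-(c * k)) by ring, hχ_add]
      ring
    have step2 : ∀ a (x : H₁) (y : H₂), ∑ c, M a c (A (Wt a c (tmul x y)))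
        = ∑ k, ((d:ℂ) * (inner ℂ (b' k) y : ℂ)) •
            (V k) (Vs (k+a) (A (tmul x (b' (k+a))))) := by
      intro a x y
      simp only [step1]
      rw [Finset.sum_comm]
      apply Finset.sum_congr rfl
      intro k _
      rw [Finset.sum_comm]
      have inner_collapse : ∀ j : ZMod d,
          ∑ c, (χ (c * (j - k)) * (inner ℂ (b' j) y : ℂ)) •
            (V k) (Vs (k+a) (A (tmul x (b' (j+a)))))
          = ((if j = k then (d:ℂ) else 0) * (inner ℂ (b' j) y : ℂ)) •
            (V k) (Vs (k+a) (A (tmul x (b' (j+a))))) := by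
        intro j
        rw [← Finset.sum_smul, ← Finset.sum_mul, hchar]
        congr 2
        simp [sub_eq_zero]
      rw [Finset.sum_congr rfl (fun j _ => inner_collapse j)]
      rw [Finset.sum_eq_single k]
      · rw [if_pos rfl]
      · intro j _ hj
        rw [if_neg hj, zero_mul, zero_smul]
      · simp
    have hMain : (∑ a : ZMod d, ∑ c : ZMod d, (M a c) ∘L (A ∘L (Wt a c)))
        = ((d:ℂ)^2) • At := by
      apply hext
      intro x y
      simp only [ContinuousLinearMap.sum_apply, ContinuousLinearMap.comp_apply,
        ContinuousLinearMap.smul_apply]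
      calc ∑ a : ZMod d, ∑ c : ZMod d, M a c (A (Wt a c (tmul x y)))
          = ∑ a : ZMod d, ∑ k, ((d:ℂ) * (inner ℂ (b' k) y : ℂ)) •
              (V k) (Vs (k+a) (A (tmul x (b' (k+a))))) :=
            Finset.sum_congr rfl (fun a _ => step2 a x y)
        _ = ∑ k, ∑ a : ZMod d, ((d:ℂ) * (inner ℂ (b' k) y : ℂ)) •
              (V k) (Vs (k+a) (A (tmul x (b' (k+a))))) := Finset.sum_comm
        _ = ∑ k, ((d:ℂ) * (inner ℂ (b' k) y : ℂ)) • (V k) ((d:ℂ) • A' x) := by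
            apply Finset.sum_congr rfl
            intro k _
            rw [← Finset.smul_sum, ← map_sum]
            congr 2
            rw [← htrace x]
            exact Fintype.sum_equiv (Equiv.addLeft k) _ _ (fun a => rfl)
        _ = ((d:ℂ)^2) • At (tmul x y) := by
            rw [hAt, ← hrepr (A' x) y, Finset.smul_sum]
            apply Finset.sum_congr rfl
            intro k _
            rw [map_smul, hV, smul_smul, smul_smul]
            congr 1
            ring
    have hd2 : ((d:ℂ)^2) ≠ 0 := pow_ne_zero 2 hdC
    have hsum2 : (∑ a : ZMod d, ∑ c : ZMod d, (M a c) ∘L ((Wt a c) ∘L A))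
        = ((d:ℂ)^2) • A := by
      have : ∀ a c : ZMod d, (M a c) ∘L ((Wt a c) ∘L A) = A := by
        intro a c
        rw [← ContinuousLinearMap.comp_assoc, hMWt, ContinuousLinearMap.id_comp]
      rw [Finset.sum_congr rfl (fun a _ => Finset.sum_congr rfl (fun c _ => this a c))]
      rw [Finset.sum_const, Finset.sum_const, Finset.card_univ, ZMod.card, smul_smul,
        ← Nat.cast_smul_eq_nsmul ℂ]
      congr 1
      push_cast
      ring
    have hfinal : At - A = ((d:ℂ)^2)⁻¹ •
        (∑ a : ZMod d, ∑ c : ZMod d,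
          (M a c) ∘L ((A ∘L (Wt a c)) - ((Wt a c) ∘L A))) := by
      have hexp : (∑ a : ZMod d, ∑ c : ZMod d,
            (M a c) ∘L ((A ∘L (Wt a c)) - ((Wt a c) ∘L A)))
          = (∑ a : ZMod d, ∑ c : ZMod d, (M a c) ∘L (A ∘L (Wt a c)))
            - (∑ a : ZMod d, ∑ c : ZMod d, (M a c) ∘L ((Wt a c) ∘L A)) := by
        rw [← Finset.sum_sub_distrib]
        apply Finset.sum_congr rfl
        intro a _
        rw [← Finset.sum_sub_distrib]
        apply Finset.sum_congr rfl
        intro c _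
        rw [ContinuousLinearMap.comp_sub]
      rw [hexp, hMain, hsum2, ← smul_sub, smul_smul, inv_mul_cancel₀ hd2, one_smul]
    have hdR : (0:ℝ) < (d:ℝ) := by
      have : 0 < d := Nat.pos_of_ne_zero (NeZero.ne d)
      exact_mod_cast this
    have hterm : ∀ a c : ZMod d,
        ‖(M a c) ∘L ((A ∘L (Wt a c)) - ((Wt a c) ∘L A))‖ ≤ ε := by
      intro a c
      calc ‖(M a c) ∘L ((A ∘L (Wt a c)) - ((Wt a c) ∘L A))‖
          ≤ ‖M a c‖ * ‖(A ∘L (Wt a c)) - ((Wt a c) ∘L A)‖ :=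
            ContinuousLinearMap.opNorm_comp_le _ _
        _ ≤ 1 * (ε * ‖Wop a c‖) := by
            apply mul_le_mul (hMnormle a c) (hcomm (Wop a c) (Wt a c) (hWt_apply a c))
              (norm_nonneg _) zero_le_one
        _ ≤ 1 * (ε * 1) := by
            apply mul_le_mul_of_nonneg_left _ zero_le_one
            exact mul_le_mul_of_nonneg_left (hWnorm a c) hε
        _ = ε := by ring
    calc ‖At - A‖
        = ‖((d:ℂ)^2)⁻¹‖ * ‖∑ a : ZMod d, ∑ c : ZMod d,
            (M a c) ∘L ((A ∘L (Wt a c)) - ((Wt a c) ∘L A))‖ := by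
          rw [hfinal, norm_smul]
      _ ≤ ‖((d:ℂ)^2)⁻¹‖ * ((d:ℝ)^2 * ε) := by
          apply mul_le_mul_of_nonneg_left _ (norm_nonneg _)
          calc ‖∑ a : ZMod d, ∑ c : ZMod d,
                (M a c) ∘L ((A ∘L (Wt a c)) - ((Wt a c) ∘L A))‖
              ≤ ∑ a : ZMod d, ∑ c : ZMod d,
                ‖(M a c) ∘L ((A ∘L (Wt a c)) - ((Wt a c) ∘L A))‖ := by
                refine (norm_sum_le _ _).trans (Finset.sum_le_sum fun a _ => norm_sum_le _ _)
            _ ≤ ∑ _a : ZMod d, ∑ _c : ZMod d, ε :=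
                Finset.sum_le_sum fun a _ => Finset.sum_le_sum fun c _ => hterm a c
            _ = (d:ℝ)^2 * ε := by
                simp [Finset.sum_const, Finset.card_univ, ZMod.card]
                ring
      _ = ε := by
          rw [norm_inv, norm_pow, Complex.norm_natCast]
          field_simp
end

section
/- Let H₁, H₂ be Hilbert spaces, ε ≥ 0, and A ∈ B(H₁ ⊗ H₂) with ‖[A, 1 ⊗ B]‖ ≤ ε‖B‖ for all B ∈ B(H₂). For a unit vector ξ ∈ H₂ define A_ξ ∈ B(H₁) by ⟨φ, A_ξ ψ⟩ = ⟨φ⊗ξ, A(ψ⊗ξ)⟩. Then for any two unit vectors ξ, η ∈ H₂, ‖A_ξ − A_η‖ ≤ ε. -/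
/-- Let `H₁, H₂` be Hilbert spaces realized in a Hilbert tensor product `H`, `ε ≥ 0`, and
`A ∈ B(H₁⊗H₂)` with `‖[A, 1⊗B]‖ ≤ ε‖B‖` for all `B ∈ B(H₂)`.  For a unit vector `ξ ∈ H₂`
let `A_ξ ∈ B(H₁)` be the slice `⟨φ, A_ξ ψ⟩ = ⟨φ⊗ξ, A(ψ⊗ξ)⟩`.  Then for any two unit
vectors `ξ, η ∈ H₂`, `‖A_ξ − A_η‖ ≤ ε`. -/
theorem slice_operators_close
    {H₁ H₂ H : Type*}
    [NormedAddCommGroup H₁] [InnerProductSpace ℂ H₁] [CompleteSpace H₁]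
    [NormedAddCommGroup H₂] [InnerProductSpace ℂ H₂] [CompleteSpace H₂]
    [NormedAddCommGroup H] [InnerProductSpace ℂ H] [CompleteSpace H]
    (tmul : H₁ →L[ℂ] H₂ →L[ℂ] H)
    (htmul : ∀ (x x' : H₁) (y y' : H₂),
      (inner ℂ (tmul x y) (tmul x' y') : ℂ) = (inner ℂ x x' : ℂ) * (inner ℂ y y' : ℂ))
    (hdense : Dense (Submodule.span ℂ {z : H | ∃ x y, z = tmul x y} : Set H))
    (ε : ℝ) (hε : 0 ≤ ε)
    (A : H →L[ℂ] H)
    (hcomm : ∀ (B : H₂ →L[ℂ] H₂) (Bt : H →L[ℂ] H),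
      (∀ x y, Bt (tmul x y) = tmul x (B y)) →
      ‖A ∘L Bt - Bt ∘L A‖ ≤ ε * ‖B‖)
    (ξ η : H₂) (hξ : ‖ξ‖ = 1) (hη : ‖η‖ = 1)
    (Aξ Aη : H₁ →L[ℂ] H₁)
    (hAξ : ∀ φ ψ : H₁, (inner ℂ φ (Aξ ψ) : ℂ) = (inner ℂ (tmul φ ξ) (A (tmul ψ ξ)) : ℂ))
    (hAη : ∀ φ ψ : H₁, (inner ℂ φ (Aη ψ) : ℂ) = (inner ℂ (tmul φ η) (A (tmul ψ η)) : ℂ)) :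
    ‖Aξ - Aη‖ ≤ ε := by

  classical
  -- the isometric embeddings `φ ↦ φ ⊗ ξ` and `φ ↦ φ ⊗ η`
  have hξ2 : (inner ℂ ξ ξ : ℂ) = 1 := by
    rw [inner_self_eq_norm_sq_to_K, hξ]; norm_num
  have hη2 : (inner ℂ η η : ℂ) = 1 := by
    rw [inner_self_eq_norm_sq_to_K, hη]; norm_num
  have norm_tmul : ∀ (x : H₁) (y : H₂), ‖tmul x y‖ = ‖x‖ * ‖y‖ := by
    intro x y
    have h' : ‖tmul x y‖ ^ 2 = (‖x‖ * ‖y‖) ^ 2 := by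
      rw [← inner_self_eq_norm_sq (𝕜 := ℂ), htmul, inner_self_eq_norm_sq_to_K,
        inner_self_eq_norm_sq_to_K, ← RCLike.ofReal_pow, ← RCLike.ofReal_pow,
        ← RCLike.ofReal_mul, RCLike.ofReal_re]
      ring
    rw [← Real.sqrt_sq (norm_nonneg (tmul x y)), h',
      Real.sqrt_sq (by positivity)]
  -- adjoint of the embedding, computed on pure tensors
  have hadj : ∀ (v : H₂) (x : H₁) (y : H₂),
      (ContinuousLinearMap.adjoint (tmul.flip v)) (tmul x y)
        = (inner ℂ v y : ℂ) • x := by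
    intro v x y
    apply ext_inner_left ℂ
    intro w
    rw [ContinuousLinearMap.adjoint_inner_right]
    simp only [ContinuousLinearMap.flip_apply, htmul, inner_smul_right]
    ring
  -- the rank-one operator `B = |η⟩⟨ξ|` and its ampliation `Bt = 1 ⊗ B`
  set B : H₂ →L[ℂ] H₂ := (innerSL ℂ ξ).smulRight η with hBdef
  set Bt : H →L[ℂ] H :=
    (tmul.flip η) ∘L ContinuousLinearMap.adjoint (tmul.flip ξ) with hBtdef
  have hBtt : ∀ x y, Bt (tmul x y) = tmul x (B y) := by
    intro x y
    simp only [hBtdef, hBdef, ContinuousLinearMap.coe_comp', Function.comp_apply,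
      hadj, map_smul, ContinuousLinearMap.flip_apply,
      ContinuousLinearMap.smulRight_apply, innerSL_apply_apply,
      ContinuousLinearMap.map_smul]
  have hBnorm : ‖B‖ = 1 := by
    rw [hBdef, ContinuousLinearMap.norm_smulRight_apply, innerSL_apply_norm,
      hξ, hη, one_mul]
  set C : H →L[ℂ] H := A ∘L Bt - Bt ∘L A with hCdef
  have hC : ‖C‖ ≤ ε := by
    have := hcomm B Bt hBtt
    rwa [hBnorm, mul_one] at this
  -- the key identity
  have key : ∀ φ ψ : H₁,
      (inner ℂ φ ((Aη - Aξ) ψ) : ℂ) = inner ℂ (tmul φ η) (C (tmul ψ ξ)) := by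
    intro φ ψ
    have h1 : (inner ℂ (tmul φ η) ((A ∘L Bt) (tmul ψ ξ)) : ℂ) = inner ℂ φ (Aη ψ) := by
      rw [ContinuousLinearMap.comp_apply, hBtt]
      have hBξ : B ξ = η := by
        simp only [hBdef, ContinuousLinearMap.smulRight_apply, innerSL_apply_apply, hξ2,
          one_smul]
      rw [hBξ, ← hAη]
    have h2 : (inner ℂ (tmul φ η) ((Bt ∘L A) (tmul ψ ξ)) : ℂ) = inner ℂ φ (Aξ ψ) := by
      rw [ContinuousLinearMap.comp_apply, hBtdef, ContinuousLinearMap.comp_apply,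
        ← ContinuousLinearMap.adjoint_inner_left (tmul.flip η),
        hadj, hη2, one_smul,
        ContinuousLinearMap.adjoint_inner_right (tmul.flip ξ)]
      rw [hAξ]
      rfl
    simp only [hCdef, ContinuousLinearMap.sub_apply, inner_sub_right,
      ContinuousLinearMap.sub_apply] at *
    rw [h1, h2]
  -- bound on vectors
  have hvec : ∀ ψ : H₁, ‖(Aη - Aξ) ψ‖ ≤ ε * ‖ψ‖ := by
    intro ψ
    set u : H₁ := (Aη - Aξ) ψ with hu
    have h := key u ψ
    have hb : ‖(inner ℂ u u : ℂ)‖ ≤ ‖u‖ * (ε * ‖ψ‖) := by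
      rw [h]
      calc ‖(inner ℂ (tmul u η) (C (tmul ψ ξ)) : ℂ)‖
          ≤ ‖tmul u η‖ * ‖C (tmul ψ ξ)‖ := norm_inner_le_norm _ _
        _ ≤ ‖tmul u η‖ * (‖C‖ * ‖tmul ψ ξ‖) := by
            gcongr; exact C.le_opNorm _
        _ ≤ ‖tmul u η‖ * (ε * ‖tmul ψ ξ‖) := by
            gcongr
        _ = ‖u‖ * (ε * ‖ψ‖) := by rw [norm_tmul, norm_tmul, hη, hξ]; ring
    have hsq : ‖u‖ ^ 2 ≤ ‖u‖ * (ε * ‖ψ‖) := by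
      rw [inner_self_eq_norm_sq_to_K] at hb
      simpa [abs_of_nonneg (norm_nonneg u)] using hb
    rcases eq_or_lt_of_le (norm_nonneg u) with h0 | h0
    · rw [← h0]; positivity
    · nlinarith
  rw [norm_sub_rev]
  exact (Aη - Aξ).opNorm_le_bound (by positivity) hvec
end

section
/- Let H₁, H₂ be Hilbert spaces, ε ≥ 0, A ∈ B(H₁⊗H₂) with ‖[A, 1⊗B]‖ ≤ ε‖B‖ for all B ∈ B(H₂), and let ρ be a normal state on B(H₂). Then the conditional expectation Π = id ⊗ ρ satisfies ‖Π(A) ⊗ 1 − A‖ ≤ 2ε. -/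
set_option linter.unusedSectionVars false
set_option maxHeartbeats 1000000
open ContinuousLinearMap Finset
noncomputable section
local notation "⟪" x ", " y "⟫" => @inner ℂ _ _ x y

namespace CondExpAux

lemma real_of_sq {a b : ℝ} (ha : 0 ≤ a) (hb : 0 ≤ b) (h : a ^ 2 = b ^ 2) : a = b := by
  have := congrArg Real.sqrt h
  rwa [Real.sqrt_sq ha, Real.sqrt_sq hb] at this

/-- sign function -/
def gsign (b : Bool) : ℂ := cond b (-1) 1

lemma gsign_mul_self (b : Bool) : gsign b * gsign b = 1 := by cases b <;> simp [gsign]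
lemma gsign_conj (b : Bool) : (starRingEnd ℂ) (gsign b) = gsign b := by cases b <;> simp [gsign]
lemma gsign_not (b : Bool) : gsign (!b) = - gsign b := by cases b <;> simp [gsign]
lemma gsign_norm (b : Bool) : ‖gsign b‖ = 1 := by cases b <;> simp [gsign]

lemma char_sum {n : ℕ} (m m' : Fin n) :
    ∑ s : Fin n → Bool, gsign (s m) * gsign (s m')
      = if m = m' then ((2:ℂ))^n else 0 := by
  by_cases h : m = m'
  · subst h
    simp only [gsign_mul_self, Finset.sum_const, Finset.card_univ, if_pos rfl]
    rw [Fintype.card_fun]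
    simp
  · rw [if_neg h]
    have hinv : Function.Involutive
        (fun s : Fin n → Bool => Function.update s m (!(s m))) := by
      intro s
      funext i
      by_cases hi : i = m
      · subst hi; simp
      · simp [Function.update_of_ne hi]
    have hkey := Equiv.sum_comp (Function.Involutive.toPerm _ hinv)
      (fun s : Fin n → Bool => gsign (s m) * gsign (s m'))
    have heval : ∀ s : Fin n → Bool,
        gsign ((Function.Involutive.toPerm _ hinv) s m)
          * gsign ((Function.Involutive.toPerm _ hinv) s m')
        = - (gsign (s m) * gsign (s m')) := by
      intro s
      have h1 : (Function.Involutive.toPerm _ hinv) s m = !(s m) := by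
        simp [Function.Involutive.toPerm]
      have h2 : (Function.Involutive.toPerm _ hinv) s m' = s m' := by
        simp [Function.Involutive.toPerm, Function.update_of_ne (Ne.symm h)]
      rw [h1, h2, gsign_not]; ring
    rw [Finset.sum_congr rfl (fun s _ => heval s), Finset.sum_neg_distrib] at hkey
    linear_combination (-1/2 : ℂ) * hkey

variable {H₁ H₂ H : Type*}
  [NormedAddCommGroup H₁] [InnerProductSpace ℂ H₁] [CompleteSpace H₁]
  [NormedAddCommGroup H₂] [InnerProductSpace ℂ H₂] [CompleteSpace H₂]
  [NormedAddCommGroup H] [InnerProductSpace ℂ H] [CompleteSpace H]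

section main
variable (tmul : H₁ →L[ℂ] H₂ →L[ℂ] H)

/-- `V y : H₁ →L H`, `x ↦ x ⊗ y`. -/
def V (y : H₂) : H₁ →L[ℂ] H := tmul.flip y

lemma V_apply (y : H₂) (x : H₁) : V tmul y x = tmul x y := rfl

/-- sign-flip operator on `H₂` -/
def BS {n : ℕ} (f : Fin n → H₂) (s : Fin n → Bool) : H₂ →L[ℂ] H₂ :=
  ContinuousLinearMap.id ℂ H₂ - (2:ℂ) • ∑ m ∈ Finset.univ.filter (fun m => s m = true),
    (innerSL ℂ (f m)).smulRight (f m)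

/-- sign-flip operator on `H` -/
def UT {n : ℕ} (f : Fin n → H₂) (s : Fin n → Bool) : H →L[ℂ] H :=
  ContinuousLinearMap.id ℂ H - (2:ℂ) • ∑ m ∈ Finset.univ.filter (fun m => s m = true),
    (V tmul (f m)) ∘L adjoint (V tmul (f m))

variable
  (htmul : ∀ (x x' : H₁) (y y' : H₂),
      (inner ℂ (tmul x y) (tmul x' y') : ℂ) = (inner ℂ x x' : ℂ) * (inner ℂ y y' : ℂ))
  (ε : ℝ) (hε : 0 ≤ ε) (A : H →L[ℂ] H)
  (hcomm : ∀ (B : H₂ →L[ℂ] H₂) (Bt : H →L[ℂ] H),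
      (∀ x y, Bt (tmul x y) = tmul x (B y)) →
      ‖A ∘L Bt - Bt ∘L A‖ ≤ ε * ‖B‖)

include htmul in
lemma norm_tmul (x : H₁) (y : H₂) : ‖tmul x y‖ = ‖x‖ * ‖y‖ := by
  have h := htmul x x y y
  rw [inner_self_eq_norm_sq_to_K, inner_self_eq_norm_sq_to_K, inner_self_eq_norm_sq_to_K] at h
  have h2 : ‖tmul x y‖ ^ 2 = (‖x‖ * ‖y‖) ^ 2 := by
    rw [mul_pow]; exact_mod_cast h
  exact real_of_sq (norm_nonneg _) (by positivity) h2

include htmul in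
lemma adjV_tmul (g : H₂) (x : H₁) (y : H₂) :
    adjoint (V tmul g) (tmul x y) = ⟪g, y⟫ • x := by
  refine ext_inner_left ℂ fun z => ?_
  rw [adjoint_inner_right, inner_smul_right, V_apply, htmul]
  ring

include htmul hε hcomm in
/-- Comparison of two diagonal slices. -/
lemma slice_compare {ξ f : H₂} (hξ : ‖ξ‖ = 1) (hf : ‖f‖ = 1) (a b : H₁) :
    ‖⟪tmul a ξ, A (tmul b ξ)⟫ - ⟪tmul a f, A (tmul b f)⟫‖ ≤ ε * (‖a‖ * ‖b‖) := by
  set B : H₂ →L[ℂ] H₂ := (innerSL ℂ ξ).smulRight f with hB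
  set Bt : H →L[ℂ] H := (V tmul f) ∘L adjoint (V tmul ξ) with hBt
  have hcompat : ∀ x y, Bt (tmul x y) = tmul x (B y) := by
    intro x y
    rw [hBt, comp_apply, adjV_tmul tmul htmul, map_smul, hB]
    simp only [smulRight_apply, innerSL_apply_apply, map_smul]
    rfl
  have hBnorm : ‖B‖ ≤ 1 := by
    rw [hB, norm_smulRight_apply, innerSL_apply_norm, hξ, hf]; norm_num
  have hcb : ‖A ∘L Bt - Bt ∘L A‖ ≤ ε := by
    calc ‖A ∘L Bt - Bt ∘L A‖ ≤ ε * ‖B‖ := hcomm B Bt hcompat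
    _ ≤ ε * 1 := by exact mul_le_mul_of_nonneg_left hBnorm hε
    _ = ε := mul_one ε
  have hξξ : ⟪ξ, ξ⟫ = 1 := by
    rw [inner_self_eq_norm_sq_to_K, hξ]; norm_num
  have hff : ⟪f, f⟫ = 1 := by
    rw [inner_self_eq_norm_sq_to_K, hf]; norm_num
  have h1 : (A ∘L Bt) (tmul b ξ) = A (tmul b f) := by
    rw [comp_apply, hcompat, hB]
    simp only [smulRight_apply, innerSL_apply_apply, hξξ, one_smul]
  have h2 : ⟪tmul a f, (Bt ∘L A) (tmul b ξ)⟫ = ⟪tmul a ξ, A (tmul b ξ)⟫ := by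
    rw [comp_apply, hBt, comp_apply, ← adjoint_inner_left (V tmul f)]
    have h6 : adjoint (V tmul f) (tmul a f) = a := by
      rw [adjV_tmul tmul htmul, hff, one_smul]
    rw [h6, adjoint_inner_right]
    rfl
  have key : ⟪tmul a ξ, A (tmul b ξ)⟫ - ⟪tmul a f, A (tmul b f)⟫
      = - ⟪tmul a f, (A ∘L Bt - Bt ∘L A) (tmul b ξ)⟫ := by
    rw [sub_apply, inner_sub_right, h1, h2]; ring
  rw [key, norm_neg]
  calc ‖⟪tmul a f, (A ∘L Bt - Bt ∘L A) (tmul b ξ)⟫‖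
      ≤ ‖tmul a f‖ * ‖(A ∘L Bt - Bt ∘L A) (tmul b ξ)‖ := norm_inner_le_norm _ _
    _ ≤ ‖tmul a f‖ * (‖A ∘L Bt - Bt ∘L A‖ * ‖tmul b ξ‖) := by
        exact mul_le_mul_of_nonneg_left (le_opNorm _ _) (norm_nonneg _)
    _ ≤ ‖tmul a f‖ * (ε * ‖tmul b ξ‖) := by
        refine mul_le_mul_of_nonneg_left ?_ (norm_nonneg _)
        exact mul_le_mul_of_nonneg_right hcb (norm_nonneg _)
    _ = ε * (‖a‖ * ‖b‖) := by
        rw [norm_tmul tmul htmul, norm_tmul tmul htmul, hξ, hf]; ring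

include htmul in
lemma inner_sum_tmul {n : ℕ} {f : Fin n → H₂} (hf : Orthonormal ℂ f)
    (c d : Fin n → H₁) :
    ⟪∑ m, tmul (c m) (f m), ∑ m, tmul (d m) (f m)⟫ = ∑ m, ⟪c m, d m⟫ := by
  rw [sum_inner]
  refine Finset.sum_congr rfl fun m _ => ?_
  rw [inner_sum]
  rw [Finset.sum_eq_single m]
  · rw [htmul, orthonormal_iff_ite.mp hf]
    simp
  · intro m' _ hm'
    rw [htmul, orthonormal_iff_ite.mp hf]
    simp [Ne.symm hm']
  · simp

include htmul in
lemma norm_sq_sum_tmul {n : ℕ} {f : Fin n → H₂} (hf : Orthonormal ℂ f)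
    (c : Fin n → H₁) :
    ‖∑ m, tmul (c m) (f m)‖ ^ 2 = ∑ m, ‖c m‖ ^ 2 := by
  have h := inner_sum_tmul tmul htmul hf c c
  rw [inner_self_eq_norm_sq_to_K] at h
  have h4 : ∀ m : Fin n, ⟪c m, c m⟫ = ((‖c m‖ : ℂ)) ^ 2 := fun m =>
    inner_self_eq_norm_sq_to_K (c m)
  rw [Finset.sum_congr rfl (fun m _ => h4 m)] at h
  have h5 : ((‖∑ m, tmul (c m) (f m)‖ ^ 2 : ℝ) : ℂ) = ((∑ m, ‖c m‖ ^ 2 : ℝ) : ℂ) := by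
    push_cast; exact h
  exact_mod_cast h5

include htmul in
lemma UT_compat {n : ℕ} (f : Fin n → H₂) (s : Fin n → Bool) (x : H₁) (y : H₂) :
    UT tmul f s (tmul x y) = tmul x (BS f s y) := by
  simp only [UT, BS, sub_apply, id_apply, smul_apply, ContinuousLinearMap.sum_apply,
    comp_apply, adjV_tmul tmul htmul, map_smul, map_sub, map_sum,
    smulRight_apply, innerSL_apply_apply]
  rfl

lemma BS_apply_f {n : ℕ} {f : Fin n → H₂} (hf : Orthonormal ℂ f) (s : Fin n → Bool)
    (m' : Fin n) : BS f s (f m') = gsign (s m') • f m' := by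
  have hite : ∀ m ∈ Finset.univ.filter (fun m => s m = true),
      ((innerSL ℂ (f m)).smulRight (f m)) (f m')
        = if m = m' then f m' else 0 := by
    intro m _
    simp only [smulRight_apply, innerSL_apply_apply, orthonormal_iff_ite.mp hf]
    split <;> simp_all
  simp only [BS, sub_apply, id_apply, smul_apply, ContinuousLinearMap.sum_apply]
  rw [Finset.sum_congr rfl hite, Finset.sum_ite_eq']
  by_cases hs : s m' = true
  · have hmem : m' ∈ Finset.univ.filter (fun m => s m = true) := by simp [hs]
    rw [if_pos hmem, gsign, hs]
    simp
    module
  · have hmem : m' ∉ Finset.univ.filter (fun m => s m = true) := by simp [hs]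
    rw [if_neg hmem]
    have hfalse : s m' = false := by simp_all
    rw [gsign, hfalse]
    simp

lemma UT_selfadj {n : ℕ} (f : Fin n → H₂) (s : Fin n → Bool) (z w : H) :
    ⟪UT tmul f s z, w⟫ = ⟪z, UT tmul f s w⟫ := by
  have hterm : ∀ (m : Fin n),
      ⟪(V tmul (f m) ∘L adjoint (V tmul (f m))) z, w⟫
        = ⟪z, (V tmul (f m) ∘L adjoint (V tmul (f m))) w⟫ := by
    intro m
    rw [comp_apply, comp_apply, ← adjoint_inner_right, adjoint_inner_left]
  simp only [UT, sub_apply, id_apply, smul_apply, ContinuousLinearMap.sum_apply,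
    inner_sub_left, inner_sub_right, inner_smul_left, inner_smul_right,
    sum_inner, inner_sum, Complex.conj_ofNat]
  rw [Finset.sum_congr rfl (fun m _ => hterm m)]

lemma BS_norm {n : ℕ} {f : Fin n → H₂} (hf : Orthonormal ℂ f) (s : Fin n → Bool) :
    ‖BS f s‖ ≤ 1 := by
  refine opNorm_le_bound _ zero_le_one fun y => ?_
  rw [one_mul]
  set T := Finset.univ.filter (fun m => s m = true) with hT
  set q : H₂ := ∑ m ∈ T, ⟪f m, y⟫ • f m with hq
  have hBy : BS f s y = y - (2:ℂ) • q := by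
    simp only [BS, sub_apply, id_apply, smul_apply, ContinuousLinearMap.sum_apply,
      smulRight_apply, innerSL_apply_apply, hq, hT]
  have e2 : ⟪q, y⟫ = ∑ m ∈ T, (starRingEnd ℂ) ⟪f m, y⟫ * ⟪f m, y⟫ := by
    rw [hq, sum_inner]
    exact Finset.sum_congr rfl fun m _ => by rw [inner_smul_left]
  have e3 : ⟪y, q⟫ = ∑ m ∈ T, (starRingEnd ℂ) ⟪f m, y⟫ * ⟪f m, y⟫ := by
    rw [hq, inner_sum]
    refine Finset.sum_congr rfl fun m _ => ?_
    rw [inner_smul_right, ← inner_conj_symm y (f m)]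
    ring
  have e1 : ⟪q, q⟫ = ∑ m ∈ T, (starRingEnd ℂ) ⟪f m, y⟫ * ⟪f m, y⟫ := by
    rw [hq, sum_inner]
    refine Finset.sum_congr rfl fun m hm => ?_
    rw [inner_smul_left, ← hq]
    have hfq : ⟪f m, q⟫ = ⟪f m, y⟫ := by
      rw [hq, inner_sum]
      rw [Finset.sum_eq_single_of_mem m hm]
      · rw [inner_smul_right, orthonormal_iff_ite.mp hf]; simp
      · intro m' _ hm'
        rw [inner_smul_right, orthonormal_iff_ite.mp hf]
        simp [Ne.symm hm']
    rw [hfq]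
  have hby2 : ⟪BS f s y, BS f s y⟫ = ⟪y, y⟫ := by
    rw [hBy]
    simp only [inner_sub_left, inner_sub_right, inner_smul_left, inner_smul_right,
      Complex.conj_ofNat]
    linear_combination (4:ℂ) * e1 - 2 * e2 - 2 * e3
  rw [inner_self_eq_norm_sq_to_K, inner_self_eq_norm_sq_to_K] at hby2
  have hre : ‖BS f s y‖ ^ 2 = ‖y‖ ^ 2 := by exact_mod_cast hby2
  exact le_of_eq (real_of_sq (norm_nonneg _) (norm_nonneg _) hre)

include htmul in
lemma UT_on_sum {n : ℕ} {f : Fin n → H₂} (hf : Orthonormal ℂ f) (s : Fin n → Bool)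
    (c : Fin n → H₁) :
    UT tmul f s (∑ m, tmul (c m) (f m)) = ∑ m, gsign (s m) • tmul (c m) (f m) := by
  rw [map_sum]
  exact Finset.sum_congr rfl fun m _ => by
    rw [UT_compat tmul htmul, BS_apply_f hf, map_smul]

include htmul hε hcomm in
lemma diag_bound {n : ℕ} {f : Fin n → H₂} (hf : Orthonormal ℂ f) (uc vc : Fin n → H₁) :
    ‖(∑ m, ⟪tmul (uc m) (f m), A (tmul (vc m) (f m))⟫)
        - ⟪∑ m, tmul (uc m) (f m), A (∑ m, tmul (vc m) (f m))⟫‖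
      ≤ ε * (‖∑ m, tmul (uc m) (f m)‖ * ‖∑ m, tmul (vc m) (f m)‖) := by
  set u : H := ∑ m, tmul (uc m) (f m) with hu
  set v : H := ∑ m, tmul (vc m) (f m) with hv
  -- signed vectors
  set us : (Fin n → Bool) → H := fun s => ∑ m, tmul (gsign (s m) • uc m) (f m) with hus
  set vs : (Fin n → Bool) → H := fun s => ∑ m, tmul (gsign (s m) • vc m) (f m) with hvs
  have husmul : ∀ (s : Fin n → Bool) (c : Fin n → H₁) (m : Fin n),
      tmul (gsign (s m) • c m) (f m) = gsign (s m) • tmul (c m) (f m) := by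
    intro s c m
    rw [map_smul]
    rfl
  have hUtu : ∀ s, UT tmul f s u = us s := by
    intro s
    rw [hu, UT_on_sum tmul htmul hf, hus]
    exact Finset.sum_congr rfl fun m _ => (husmul s uc m).symm
  have hUtv : ∀ s, UT tmul f s v = vs s := by
    intro s
    rw [hv, UT_on_sum tmul htmul hf, hvs]
    exact Finset.sum_congr rfl fun m _ => (husmul s vc m).symm
  have hUtus : ∀ s, UT tmul f s (us s) = u := by
    intro s
    rw [hus]
    simp only
    rw [map_sum]
    refine Finset.sum_congr rfl fun m _ => ?_
    rw [UT_compat tmul htmul, BS_apply_f hf, map_smul, husmul s uc m, smul_smul,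
      gsign_mul_self, one_smul]
  have hnormus : ∀ s, ‖us s‖ = ‖u‖ := by
    intro s
    have h1 : ‖us s‖ ^ 2 = ‖u‖ ^ 2 := by
      rw [hus, hu]
      simp only
      rw [norm_sq_sum_tmul tmul htmul hf, norm_sq_sum_tmul tmul htmul hf]
      refine Finset.sum_congr rfl fun m _ => ?_
      rw [norm_smul, gsign_norm, one_mul]
    exact real_of_sq (norm_nonneg _) (norm_nonneg _) h1
  -- per-sign estimate
  have hper : ∀ s, ‖⟪us s, A (vs s)⟫ - ⟪u, A v⟫‖ ≤ ε * (‖u‖ * ‖v‖) := by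
    intro s
    have hkey : ⟪us s, A (vs s)⟫ - ⟪u, A v⟫
        = ⟪us s, (A ∘L UT tmul f s - UT tmul f s ∘L A) v⟫ := by
      rw [sub_apply, inner_sub_right, comp_apply, comp_apply, hUtv s]
      have : ⟪us s, UT tmul f s (A v)⟫ = ⟪u, A v⟫ := by
        rw [← UT_selfadj, hUtus s]
      rw [this]
    rw [hkey]
    calc ‖⟪us s, (A ∘L UT tmul f s - UT tmul f s ∘L A) v⟫‖
        ≤ ‖us s‖ * ‖(A ∘L UT tmul f s - UT tmul f s ∘L A) v‖ := norm_inner_le_norm _ _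
      _ ≤ ‖us s‖ * (‖A ∘L UT tmul f s - UT tmul f s ∘L A‖ * ‖v‖) :=
          mul_le_mul_of_nonneg_left (le_opNorm _ _) (norm_nonneg _)
      _ ≤ ‖us s‖ * ((ε * ‖BS f s‖) * ‖v‖) := by
          refine mul_le_mul_of_nonneg_left ?_ (norm_nonneg _)
          exact mul_le_mul_of_nonneg_right
            (hcomm (BS f s) (UT tmul f s) (UT_compat tmul htmul f s)) (norm_nonneg _)
      _ ≤ ‖us s‖ * ((ε * 1) * ‖v‖) := by
          refine mul_le_mul_of_nonneg_left ?_ (norm_nonneg _)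
          exact mul_le_mul_of_nonneg_right
            (mul_le_mul_of_nonneg_left (BS_norm hf s) hε) (norm_nonneg _)
      _ = ε * (‖u‖ * ‖v‖) := by rw [hnormus s]; ring
  -- averaging identity
  have hexp : ∀ s, ⟪us s, A (vs s)⟫
      = ∑ m, ∑ m', (gsign (s m) * gsign (s m'))
          * ⟪tmul (uc m) (f m), A (tmul (vc m') (f m'))⟫ := by
    intro s
    rw [hus, hvs]
    simp only
    rw [map_sum, sum_inner]
    refine Finset.sum_congr rfl fun m _ => ?_
    rw [inner_sum]
    refine Finset.sum_congr rfl fun m' _ => ?_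
    rw [husmul s uc m, husmul s vc m', map_smul, inner_smul_left, inner_smul_right,
      gsign_conj]
    ring
  have hsum : ∑ s : Fin n → Bool, ⟪us s, A (vs s)⟫
      = (2:ℂ)^n * ∑ m, ⟪tmul (uc m) (f m), A (tmul (vc m) (f m))⟫ := by
    rw [Finset.sum_congr rfl (fun s _ => hexp s), Finset.sum_comm]
    have h7 : ∀ m : Fin n, ∑ s : Fin n → Bool, ∑ m',
        (gsign (s m) * gsign (s m')) * ⟪tmul (uc m) (f m), A (tmul (vc m') (f m'))⟫
        = (2:ℂ)^n * ⟪tmul (uc m) (f m), A (tmul (vc m) (f m))⟫ := by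
      intro m
      rw [Finset.sum_comm]
      have h8 : ∀ m' : Fin n, ∑ s : Fin n → Bool,
          (gsign (s m) * gsign (s m')) * ⟪tmul (uc m) (f m), A (tmul (vc m') (f m'))⟫
          = (if m = m' then (2:ℂ)^n else 0) * ⟪tmul (uc m) (f m), A (tmul (vc m') (f m'))⟫ := by
        intro m'
        rw [← Finset.sum_mul, char_sum]
      rw [Finset.sum_congr rfl (fun m' _ => h8 m')]
      rw [Finset.sum_congr rfl (fun m' _ => by
        rw [ite_mul, zero_mul] :
        ∀ m' ∈ Finset.univ, (if m = m' then (2:ℂ)^n else 0) * ⟪tmul (uc m) (f m), A (tmul (vc m') (f m'))⟫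
          = if m = m' then (2:ℂ)^n * ⟪tmul (uc m) (f m), A (tmul (vc m') (f m'))⟫ else 0)]
      rw [Finset.sum_ite_eq]
      simp
    rw [Finset.sum_congr rfl (fun m _ => h7 m), Finset.mul_sum]
  have hcard : (Finset.univ : Finset (Fin n → Bool)).card = 2^n := by
    rw [Finset.card_univ, Fintype.card_fun]
    simp
  have h2n : ((2:ℂ)^n) ≠ 0 := pow_ne_zero _ two_ne_zero
  have hfinal : (∑ m, ⟪tmul (uc m) (f m), A (tmul (vc m) (f m))⟫) - ⟪u, A v⟫
      = ((2:ℂ)^n)⁻¹ * ∑ s : Fin n → Bool, (⟪us s, A (vs s)⟫ - ⟪u, A v⟫) := by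
    rw [Finset.sum_sub_distrib, hsum, Finset.sum_const, hcard]
    rw [nsmul_eq_mul]
    push_cast
    field_simp
  rw [hfinal]
  rw [norm_mul]
  have h9 : ‖((2:ℂ)^n)⁻¹‖ = ((2:ℝ)^n)⁻¹ := by
    rw [norm_inv, norm_pow]
    norm_num
  rw [h9]
  calc ((2:ℝ)^n)⁻¹ * ‖∑ s : Fin n → Bool, (⟪us s, A (vs s)⟫ - ⟪u, A v⟫)‖
      ≤ ((2:ℝ)^n)⁻¹ * ∑ s : Fin n → Bool, ‖⟪us s, A (vs s)⟫ - ⟪u, A v⟫‖ := by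
        refine mul_le_mul_of_nonneg_left (norm_sum_le _ _) (by positivity)
    _ ≤ ((2:ℝ)^n)⁻¹ * ∑ s : Fin n → Bool, ε * (‖u‖ * ‖v‖) := by
        refine mul_le_mul_of_nonneg_left (Finset.sum_le_sum fun s _ => hper s) (by positivity)
    _ = ε * (‖u‖ * ‖v‖) := by
        rw [Finset.sum_const, hcard, nsmul_eq_mul]
        push_cast
        field_simp

include htmul hε hcomm in
lemma core_bound {n : ℕ} {f : Fin n → H₂} (hf : Orthonormal ℂ f)
    {ξ : H₂} (hξ : ‖ξ‖ = 1) (uc vc : Fin n → H₁) :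
    ‖(∑ m, ⟪tmul (uc m) ξ, A (tmul (vc m) ξ)⟫)
        - ⟪∑ m, tmul (uc m) (f m), A (∑ m, tmul (vc m) (f m))⟫‖
      ≤ 2 * ε * (‖∑ m, tmul (uc m) (f m)‖ * ‖∑ m, tmul (vc m) (f m)‖) := by
  set u : H := ∑ m, tmul (uc m) (f m) with hu
  set v : H := ∑ m, tmul (vc m) (f m) with hv
  have htri : ‖(∑ m, ⟪tmul (uc m) ξ, A (tmul (vc m) ξ)⟫) - ⟪u, A v⟫‖
      ≤ ‖∑ m, (⟪tmul (uc m) ξ, A (tmul (vc m) ξ)⟫ - ⟪tmul (uc m) (f m), A (tmul (vc m) (f m))⟫)‖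
        + ‖(∑ m, ⟪tmul (uc m) (f m), A (tmul (vc m) (f m))⟫) - ⟪u, A v⟫‖ := by
    have : (∑ m, ⟪tmul (uc m) ξ, A (tmul (vc m) ξ)⟫) - ⟪u, A v⟫
        = (∑ m, (⟪tmul (uc m) ξ, A (tmul (vc m) ξ)⟫ - ⟪tmul (uc m) (f m), A (tmul (vc m) (f m))⟫))
          + ((∑ m, ⟪tmul (uc m) (f m), A (tmul (vc m) (f m))⟫) - ⟪u, A v⟫) := by
      rw [Finset.sum_sub_distrib]; ring
    rw [this]
    exact norm_add_le _ _
  have hslice : ‖∑ m, (⟪tmul (uc m) ξ, A (tmul (vc m) ξ)⟫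
        - ⟪tmul (uc m) (f m), A (tmul (vc m) (f m))⟫)‖ ≤ ε * (‖u‖ * ‖v‖) := by
    calc ‖∑ m, (⟪tmul (uc m) ξ, A (tmul (vc m) ξ)⟫
          - ⟪tmul (uc m) (f m), A (tmul (vc m) (f m))⟫)‖
        ≤ ∑ m, ‖⟪tmul (uc m) ξ, A (tmul (vc m) ξ)⟫
          - ⟪tmul (uc m) (f m), A (tmul (vc m) (f m))⟫‖ := norm_sum_le _ _
      _ ≤ ∑ m, ε * (‖uc m‖ * ‖vc m‖) := Finset.sum_le_sum fun m _ =>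
          slice_compare tmul htmul ε hε A hcomm hξ (hf.1 m) (uc m) (vc m)
      _ = ε * ∑ m, ‖uc m‖ * ‖vc m‖ := by rw [Finset.mul_sum]
      _ ≤ ε * (‖u‖ * ‖v‖) := by
          refine mul_le_mul_of_nonneg_left ?_ hε
          have hcs : (∑ m, ‖uc m‖ * ‖vc m‖) ^ 2
              ≤ (∑ m, ‖uc m‖ ^ 2) * (∑ m, ‖vc m‖ ^ 2) :=
            Finset.sum_mul_sq_le_sq_mul_sq Finset.univ _ _
          rw [← norm_sq_sum_tmul tmul htmul hf uc, ← norm_sq_sum_tmul tmul htmul hf vc,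
            ← hu, ← hv, ← mul_pow] at hcs
          have h0 : (0:ℝ) ≤ ∑ m, ‖uc m‖ * ‖vc m‖ :=
            Finset.sum_nonneg fun m _ => by positivity
          have h1 : (0:ℝ) ≤ ‖u‖ * ‖v‖ := by positivity
          nlinarith [hcs, h0, h1]
  have hdiag := diag_bound tmul htmul ε hε A hcomm hf uc vc
  calc ‖(∑ m, ⟪tmul (uc m) ξ, A (tmul (vc m) ξ)⟫) - ⟪u, A v⟫‖
      ≤ _ + _ := htri
    _ ≤ ε * (‖u‖ * ‖v‖) + ε * (‖u‖ * ‖v‖) := add_le_add hslice hdiag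
    _ = 2 * ε * (‖u‖ * ‖v‖) := by ring

include htmul hε hcomm in
lemma span_bound
    (ρ : ℕ → ℝ) (hρpos : ∀ k, 0 ≤ ρ k) (hρsummable : Summable ρ)
    (hρsum : ∑' k, ρ k = 1)
    (ξ : ℕ → H₂) (hortho : Orthonormal ℂ ξ)
    (PiA : H₁ →L[ℂ] H₁)
    (hPiA : ∀ φ ψ : H₁, (inner ℂ φ (PiA ψ) : ℂ) =
      ∑' k, (ρ k : ℂ) * (inner ℂ (tmul φ (ξ k)) (A (tmul ψ (ξ k))) : ℂ))
    (PiAt : H →L[ℂ] H)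
    (hPiAt : ∀ x y, PiAt (tmul x y) = tmul (PiA x) y)
    (u v : H)
    (hu : u ∈ Submodule.span ℂ {z : H | ∃ x y, z = tmul x y})
    (hv : v ∈ Submodule.span ℂ {z : H | ∃ x y, z = tmul x y}) :
    ‖⟪u, (PiAt - A) v⟫‖ ≤ 2 * ε * (‖u‖ * ‖v‖) := by
  -- obtain finite representations as sums of simple tensors
  obtain ⟨p, cu, gu, hgu⟩ := Submodule.mem_span_set'.mp hu
  obtain ⟨q, cv, gv, hgv⟩ := Submodule.mem_span_set'.mp hv
  have hgu' : ∀ i, ∃ x y, (gu i : H) = tmul x y := fun i => (gu i).2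
  have hgv' : ∀ j, ∃ x y, (gv j : H) = tmul x y := fun j => (gv j).2
  choose xu0 yu hyu using hgu'
  choose xv0 yv hyv using hgv'
  set xu : Fin p → H₁ := fun i => cu i • xu0 i with hxu
  set xv : Fin q → H₁ := fun j => cv j • xv0 j with hxv
  have hurep0 : u = ∑ i, tmul (xu i) (yu i) := by
    rw [← hgu]
    refine Finset.sum_congr rfl fun i _ => ?_
    rw [hyu i, hxu]
    simp only [map_smul, smul_apply]
  have hvrep0 : v = ∑ j, tmul (xv j) (yv j) := by
    rw [← hgv]
    refine Finset.sum_congr rfl fun j _ => ?_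
    rw [hyv j, hxv]
    simp only [map_smul, smul_apply]
  -- the finite dimensional subspace of H₂
  set K : Submodule ℂ H₂ := Submodule.span ℂ (Set.range yu ∪ Set.range yv) with hK
  haveI : FiniteDimensional ℂ K :=
    FiniteDimensional.span_of_finite ℂ ((Set.finite_range yu).union (Set.finite_range yv))
  set n : ℕ := Module.finrank ℂ K with hn
  set b : OrthonormalBasis (Fin n) ℂ K := stdOrthonormalBasis ℂ K with hb
  set f : Fin n → H₂ := fun m => ((b m : K) : H₂) with hf
  have hforth : Orthonormal ℂ f := by
    rw [orthonormal_iff_ite]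
    intro m m'
    have h1 := orthonormal_iff_ite.mp b.orthonormal m m'
    rw [← h1]
    rfl
  have hexpand : ∀ y : H₂, y ∈ K → y = ∑ m, ⟪f m, y⟫ • f m := by
    intro y hy
    have h2 := b.sum_repr ⟨y, hy⟩
    have h3 := congrArg (Submodule.subtype K) h2
    simp only [map_sum, map_smul, Submodule.subtype_apply] at h3
    have h4 : ∀ m : Fin n, b.repr ⟨y, hy⟩ m = ⟪f m, y⟫ := by
      intro m
      rw [OrthonormalBasis.repr_apply_apply]
      rfl
    calc y = ∑ m, b.repr ⟨y, hy⟩ m • ((b m : K) : H₂) := h3.symm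
      _ = ∑ m, ⟪f m, y⟫ • f m := Finset.sum_congr rfl fun m _ => by rw [h4 m]
  have hyuK : ∀ i, yu i ∈ K := fun i =>
    Submodule.subset_span (Set.mem_union_left _ (Set.mem_range_self i))
  have hyvK : ∀ j, yv j ∈ K := fun j =>
    Submodule.subset_span (Set.mem_union_right _ (Set.mem_range_self j))
  -- coefficients in the orthonormal basis
  set uc : Fin n → H₁ := fun m => ∑ i, ⟪f m, yu i⟫ • xu i with huc
  set vc : Fin n → H₁ := fun m => ∑ j, ⟪f m, yv j⟫ • xv j with hvc
  have hrep : ∀ (r : ℕ) (xs : Fin r → H₁) (ys : Fin r → H₂) (_ : ∀ i, ys i ∈ K),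
      ∑ m, tmul (∑ i, ⟪f m, ys i⟫ • xs i) (f m) = ∑ i, tmul (xs i) (ys i) := by
    intro r xs ys hysK
    have h4 : ∀ m, tmul (∑ i, ⟪f m, ys i⟫ • xs i) (f m)
        = ∑ i, ⟪f m, ys i⟫ • tmul (xs i) (f m) := by
      intro m
      rw [← V_apply tmul (f m), map_sum]
      refine Finset.sum_congr rfl fun i _ => ?_
      rw [map_smul]
      rfl
    rw [Finset.sum_congr rfl fun m _ => h4 m, Finset.sum_comm]
    refine Finset.sum_congr rfl fun i _ => ?_
    have h5 : ∑ m, ⟪f m, ys i⟫ • tmul (xs i) (f m)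
        = tmul (xs i) (∑ m, ⟪f m, ys i⟫ • f m) := by
      rw [map_sum]
      refine Finset.sum_congr rfl fun m _ => ?_
      rw [map_smul]
    rw [h5, ← hexpand (ys i) (hysK i)]
  have hurep : u = ∑ m, tmul (uc m) (f m) := by
    rw [hurep0, huc]
    exact (hrep p xu yu hyuK).symm
  have hvrep : v = ∑ m, tmul (vc m) (f m) := by
    rw [hvrep0, hvc]
    exact (hrep q xv yv hyvK).symm
  -- reduce the PiAt part
  have hPiAtv : PiAt v = ∑ m, tmul (PiA (vc m)) (f m) := by
    rw [hvrep, map_sum]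
    exact Finset.sum_congr rfl fun m _ => hPiAt (vc m) (f m)
  have hinner1 : ⟪u, PiAt v⟫ = ∑ m, ⟪uc m, PiA (vc m)⟫ := by
    rw [hPiAtv, hurep]
    exact inner_sum_tmul tmul htmul hforth uc (fun m => PiA (vc m))
  -- summability facts
  have hAbound : ∀ (m : Fin n) (k : ℕ),
      ‖(ρ k : ℂ) * ⟪tmul (uc m) (ξ k), A (tmul (vc m) (ξ k))⟫‖
        ≤ ρ k * (‖A‖ * ‖uc m‖ * ‖vc m‖) := by
    intro m k
    rw [norm_mul, Complex.norm_real, Real.norm_eq_abs, abs_of_nonneg (hρpos k)]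
    refine mul_le_mul_of_nonneg_left ?_ (hρpos k)
    calc ‖⟪tmul (uc m) (ξ k), A (tmul (vc m) (ξ k))⟫‖
        ≤ ‖tmul (uc m) (ξ k)‖ * ‖A (tmul (vc m) (ξ k))‖ := norm_inner_le_norm _ _
      _ ≤ ‖tmul (uc m) (ξ k)‖ * (‖A‖ * ‖tmul (vc m) (ξ k)‖) :=
          mul_le_mul_of_nonneg_left (le_opNorm _ _) (norm_nonneg _)
      _ = ‖A‖ * ‖uc m‖ * ‖vc m‖ := by
          rw [norm_tmul tmul htmul, norm_tmul tmul htmul, hortho.1 k]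
          ring
  have hsummable : ∀ m : Fin n,
      Summable (fun k => (ρ k : ℂ) * ⟪tmul (uc m) (ξ k), A (tmul (vc m) (ξ k))⟫) := by
    intro m
    refine Summable.of_norm_bounded (hρsummable.mul_right (‖A‖ * ‖uc m‖ * ‖vc m‖)) ?_
    exact hAbound m
  set G : ℕ → ℂ := fun k => ∑ m, ⟪tmul (uc m) (ξ k), A (tmul (vc m) (ξ k))⟫ with hG
  have hinner2 : ⟪u, PiAt v⟫ = ∑' k, (ρ k : ℂ) * G k := by
    rw [hinner1, Finset.sum_congr rfl fun m _ => hPiA (uc m) (vc m)]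
    rw [← Summable.tsum_finsetSum (fun m _ => hsummable m)]
    refine tsum_congr fun k => ?_
    rw [hG, Finset.mul_sum]
  have hsumG : Summable (fun k => (ρ k : ℂ) * G k) := by
    have : (fun k => (ρ k : ℂ) * G k)
        = fun k => ∑ m, (ρ k : ℂ) * ⟪tmul (uc m) (ξ k), A (tmul (vc m) (ξ k))⟫ := by
      funext k; rw [hG, Finset.mul_sum]
    rw [this]
    exact summable_sum fun m _ => hsummable m
  have hone : ∑' k, ((ρ k : ℝ) : ℂ) = 1 := by
    rw [← Complex.ofReal_tsum, hρsum, Complex.ofReal_one]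
  have hsummul : Summable (fun k => (ρ k : ℂ) * ⟪u, A v⟫) :=
    (Complex.summable_ofReal.mpr hρsummable).mul_right _
  have hdiff : ⟪u, (PiAt - A) v⟫ = ∑' k, (ρ k : ℂ) * (G k - ⟪u, A v⟫) := by
    have h10 : ∑' k, (ρ k : ℂ) * ⟪u, A v⟫ = ⟪u, A v⟫ := by
      rw [tsum_mul_right, hone, one_mul]
    have e1 : ∑' k, (ρ k : ℂ) * (G k - ⟪u, A v⟫)
        = (∑' k, (ρ k : ℂ) * G k) - ∑' k, (ρ k : ℂ) * ⟪u, A v⟫ := by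
      rw [← Summable.tsum_sub hsumG hsummul]
      exact tsum_congr fun k => by ring
    rw [sub_apply, inner_sub_right, hinner2, e1, h10]
  -- the core bound for each k
  have hcore : ∀ k, ‖G k - ⟪u, A v⟫‖ ≤ 2 * ε * (‖u‖ * ‖v‖) := by
    intro k
    have := core_bound tmul htmul ε hε A hcomm hforth (hortho.1 k) uc vc
    rw [← hurep, ← hvrep] at this
    exact this
  rw [hdiff]
  have hnormterm : ∀ k, ‖(ρ k : ℂ) * (G k - ⟪u, A v⟫)‖
      ≤ ρ k * (2 * ε * (‖u‖ * ‖v‖)) := by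
    intro k
    rw [norm_mul, Complex.norm_real, Real.norm_eq_abs, abs_of_nonneg (hρpos k)]
    exact mul_le_mul_of_nonneg_left (hcore k) (hρpos k)
  have hsumnorm : Summable (fun k => ‖(ρ k : ℂ) * (G k - ⟪u, A v⟫)‖) := by
    refine Summable.of_nonneg_of_le (fun k => norm_nonneg _) hnormterm ?_
    exact hρsummable.mul_right _
  calc ‖∑' k, (ρ k : ℂ) * (G k - ⟪u, A v⟫)‖
      ≤ ∑' k, ‖(ρ k : ℂ) * (G k - ⟪u, A v⟫)‖ := norm_tsum_le_tsum_norm hsumnorm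
    _ ≤ ∑' k, ρ k * (2 * ε * (‖u‖ * ‖v‖)) :=
        Summable.tsum_le_tsum hnormterm hsumnorm (hρsummable.mul_right _)
    _ = (∑' k, ρ k) * (2 * ε * (‖u‖ * ‖v‖)) := tsum_mul_right
    _ = 2 * ε * (‖u‖ * ‖v‖) := by rw [hρsum, one_mul]

end main

end CondExpAux

/-- Let `ρ` be a normal state on `B(H₂)`, given by a density matrix
`ρ = ∑_k ρ_k |ξ_k⟩⟨ξ_k|` with `ρ_k ≥ 0`, `∑ ρ_k = 1` and `(ξ_k)` orthonormal.  If
`A ∈ B(H₁⊗H₂)` satisfies `‖[A, 1⊗B]‖ ≤ ε‖B‖` for all `B ∈ B(H₂)`, then the conditional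
expectation `Π(A) = (id ⊗ ρ)(A) = ∑_k ρ_k A_{ξ_k}` satisfies `‖Π(A)⊗1 − A‖ ≤ 2ε`. -/
theorem conditional_expectation_close
    {H₁ H₂ H : Type*}
    [NormedAddCommGroup H₁] [InnerProductSpace ℂ H₁] [CompleteSpace H₁]
    [NormedAddCommGroup H₂] [InnerProductSpace ℂ H₂] [CompleteSpace H₂]
    [NormedAddCommGroup H] [InnerProductSpace ℂ H] [CompleteSpace H]
    (tmul : H₁ →L[ℂ] H₂ →L[ℂ] H)
    (htmul : ∀ (x x' : H₁) (y y' : H₂),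
      (inner ℂ (tmul x y) (tmul x' y') : ℂ) = (inner ℂ x x' : ℂ) * (inner ℂ y y' : ℂ))
    (hdense : Dense (Submodule.span ℂ {z : H | ∃ x y, z = tmul x y} : Set H))
    (ε : ℝ) (hε : 0 ≤ ε)
    (A : H →L[ℂ] H)
    (hcomm : ∀ (B : H₂ →L[ℂ] H₂) (Bt : H →L[ℂ] H),
      (∀ x y, Bt (tmul x y) = tmul x (B y)) →
      ‖A ∘L Bt - Bt ∘L A‖ ≤ ε * ‖B‖)
    (ρ : ℕ → ℝ) (hρpos : ∀ k, 0 ≤ ρ k) (hρsummable : Summable ρ)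
    (hρsum : ∑' k, ρ k = 1)
    (ξ : ℕ → H₂) (hortho : Orthonormal ℂ ξ)
    (PiA : H₁ →L[ℂ] H₁)
    (hPiA : ∀ φ ψ : H₁, (inner ℂ φ (PiA ψ) : ℂ) =
      ∑' k, (ρ k : ℂ) * (inner ℂ (tmul φ (ξ k)) (A (tmul ψ (ξ k))) : ℂ))
    (PiAt : H →L[ℂ] H)
    (hPiAt : ∀ x y, PiAt (tmul x y) = tmul (PiA x) y) :
    ‖PiAt - A‖ ≤ 2 * ε := by
  have hspan : ∀ u v : H,
      u ∈ Submodule.span ℂ {z : H | ∃ x y, z = tmul x y} →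
      v ∈ Submodule.span ℂ {z : H | ∃ x y, z = tmul x y} →
      ‖(inner ℂ u ((PiAt - A) v) : ℂ)‖ ≤ 2 * ε * (‖u‖ * ‖v‖) := fun u v hu hv =>
    CondExpAux.span_bound tmul htmul ε hε A hcomm ρ hρpos hρsummable hρsum ξ hortho
      PiA hPiA PiAt hPiAt u v hu hv
  have h1 : ∀ v ∈ Submodule.span ℂ {z : H | ∃ x y, z = tmul x y}, ∀ u : H,
      ‖(inner ℂ u ((PiAt - A) v) : ℂ)‖ ≤ 2 * ε * (‖u‖ * ‖v‖) := by
    intro v hv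
    have hsub : (Submodule.span ℂ {z : H | ∃ x y, z = tmul x y} : Set H)
        ⊆ {u : H | ‖(inner ℂ u ((PiAt - A) v) : ℂ)‖ ≤ 2 * ε * (‖u‖ * ‖v‖)} :=
      fun u hu => hspan u v hu hv
    have hclosed : IsClosed {u : H | ‖(inner ℂ u ((PiAt - A) v) : ℂ)‖ ≤ 2 * ε * (‖u‖ * ‖v‖)} := by
      refine isClosed_le ?_ ?_
      · exact (Continuous.inner continuous_id continuous_const).norm
      · exact continuous_const.mul (continuous_norm.mul continuous_const)
    intro u
    have hcl := closure_minimal hsub hclosed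
    rw [hdense.closure_eq] at hcl
    exact hcl (Set.mem_univ u)
  have h2 : ∀ u v : H, ‖(inner ℂ u ((PiAt - A) v) : ℂ)‖ ≤ 2 * ε * (‖u‖ * ‖v‖) := by
    intro u v
    have hsub : (Submodule.span ℂ {z : H | ∃ x y, z = tmul x y} : Set H)
        ⊆ {v : H | ‖(inner ℂ u ((PiAt - A) v) : ℂ)‖ ≤ 2 * ε * (‖u‖ * ‖v‖)} :=
      fun v hv => h1 v hv u
    have hclosed : IsClosed {v : H | ‖(inner ℂ u ((PiAt - A) v) : ℂ)‖ ≤ 2 * ε * (‖u‖ * ‖v‖)} := by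
      refine isClosed_le ?_ ?_
      · exact (Continuous.inner continuous_const ((PiAt - A).continuous)).norm
      · exact continuous_const.mul (continuous_const.mul continuous_norm)
    have hcl := closure_minimal hsub hclosed
    rw [hdense.closure_eq] at hcl
    exact hcl (Set.mem_univ v)
  refine ContinuousLinearMap.opNorm_le_bound _ (by positivity) fun v => ?_
  have hv := h2 ((PiAt - A) v) v
  have h3 : ‖(inner ℂ ((PiAt - A) v) ((PiAt - A) v) : ℂ)‖ = ‖(PiAt - A) v‖ ^ 2 := by
    rw [inner_self_eq_norm_sq_to_K, norm_pow]
    rw [RCLike.norm_ofReal, abs_of_nonneg (norm_nonneg _)]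
  rw [h3] at hv
  rcases eq_or_lt_of_le (norm_nonneg ((PiAt - A) v)) with h4 | h4
  · rw [← h4]
    positivity
  · nlinarith [norm_nonneg v, hv, h4]
end
end

section
/- Under the hypotheses of the preceding statement, the unique solution U(s) of the linear ODE −i dU/ds = D(s) U(s), U(0) = 1, is unitary for each s and satisfies P(s) = U(s) P(0) U(s)*. -/
open ContinuousLinearMap

/-- Under the hypotheses of the quasi-adiabatic construction (`D(s)` bounded self-adjoint,
continuous in `s`, with `P'(s) = i[D(s), P(s)]` for a differentiable family of orthogonal
projections `P(s)`), the unique solution `U(s)` of `-i dU/ds = D(s) U(s)`, `U(0) = 1`,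
is unitary for each `s` and satisfies `P(s) = U(s) P(0) U(s)*`. -/
theorem spectral_flow_conjugates_projections
    {E : Type*} [NormedAddCommGroup E] [InnerProductSpace ℂ E] [FiniteDimensional ℂ E]
    (D : ℝ → E →L[ℂ] E) (hDsa : ∀ s, IsSelfAdjoint (D s)) (hDcont : Continuous D)
    (P P' : ℝ → E →L[ℂ] E)
    (hproj : ∀ s, P s ∘L P s = P s)
    (hPsa : ∀ s, IsSelfAdjoint (P s))
    (hPderiv : ∀ s, HasDerivAt P (P' s) s)
    (hP' : ∀ s, P' s = Complex.I • (D s ∘L P s - P s ∘L D s))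
    (U : ℝ → E →L[ℂ] E) (hU0 : U 0 = 1)
    (hUderiv : ∀ s, HasDerivAt U (Complex.I • (D s ∘L U s)) s) :
    ∀ s : ℝ,
      U s ∘L ContinuousLinearMap.adjoint (U s) = 1 ∧
      ContinuousLinearMap.adjoint (U s) ∘L U s = 1 ∧
      P s = U s ∘L P 0 ∘L ContinuousLinearMap.adjoint (U s) := by
  have hcomp : ∀ a b : E →L[ℂ] E, a ∘L b = a * b := fun _ _ => rfl
  have hadj : ∀ s, ContinuousLinearMap.adjoint (U s) = star (U s) := fun s => rfl
  -- derivative of star U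
  have hstar : ∀ s, HasDerivAt (fun t => star (U t))
      ((-Complex.I) • (star (U s) * D s)) s := by
    intro s
    have h := (hUderiv s).star
    have : star (Complex.I • (D s ∘L U s)) = (-Complex.I) • (star (U s) * D s) := by
      rw [star_smul, hcomp, star_mul, (hDsa s).star_eq]
      simp [Complex.conj_I]
    rwa [this] at h
  -- star U * U is constant
  have hUU : ∀ s, star (U s) * U s = 1 := by
    have hW : ∀ s, HasDerivAt (fun t => star (U t) * U t) 0 s := by
      intro s
      have h := (hstar s).mul (hUderiv s)
      have : (-Complex.I) • (star (U s) * D s) * U s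
          + star (U s) * (Complex.I • (D s ∘L U s)) = 0 := by
        rw [hcomp]
        simp only [hcomp, smul_mul_assoc, mul_smul_comm, mul_assoc, mul_sub, sub_mul, smul_sub]
        module
      rwa [this] at h
    intro s
    have hc : (fun t => star (U t) * U t) s = (fun t => star (U t) * U t) 0 :=
      is_const_of_deriv_eq_zero (fun t => (hW t).differentiableAt)
        (fun t => (hW t).deriv) s 0
    simpa [hU0] using hc
  -- star U * P * U is constant
  have hQ : ∀ s, star (U s) * P s * U s = P 0 := by
    have hW : ∀ s, HasDerivAt (fun t => star (U t) * P t * U t) 0 s := by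
      intro s
      have h := (((hstar s).mul (hPderiv s)).mul (hUderiv s))
      have : ((-Complex.I) • (star (U s) * D s) * P s + star (U s) * P' s) * U s
          + star (U s) * P s * (Complex.I • (D s ∘L U s)) = 0 := by
        rw [hcomp, hP' s, hcomp (D s), hcomp (P s)]
        simp only [hcomp, smul_mul_assoc, mul_smul_comm, mul_assoc, mul_sub, sub_mul,
          add_mul, smul_sub, smul_add]
        module
      simp only [Pi.mul_apply] at h
      rwa [this] at h
    intro s
    have hc : (fun t => star (U t) * P t * U t) s = (fun t => star (U t) * P t * U t) 0 :=
      is_const_of_deriv_eq_zero (fun t => (hW t).differentiableAt)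
        (fun t => (hW t).deriv) s 0
    simpa [hU0] using hc
  intro s
  have hUUl : U s * star (U s) = 1 := by
    have h1 : ((star (U s) : E →L[ℂ] E) : E →ₗ[ℂ] E) * (U s : E →ₗ[ℂ] E) = 1 :=
      congrArg ContinuousLinearMap.toLinearMap (hUU s)
    exact ContinuousLinearMap.coe_injective (mul_eq_one_comm.mp h1)
  refine ⟨by rw [hadj, hcomp]; exact hUUl, by rw [hadj, hcomp]; exact hUU s, ?_⟩
  rw [hadj, hcomp, hcomp, ← hQ s]
  calc P s = (U s * star (U s)) * P s * (U s * star (U s)) := by rw [hUUl]; simp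
    _ = U s * (star (U s) * P s * U s * star (U s)) := by simp only [mul_assoc]
end

section
/- Let H be self-adjoint on a finite-dimensional Hilbert space with spectral projection P onto an interval I such that all other spectrum lies at distance ≥ γ from I. Let λ ∈ I and μ ∉ I be eigenvalues with |λ−μ| ≥ γ, and let w_γ ∈ L¹(ℝ) satisfy ∫ w_γ = 1 with Fourier transform ŵ_γ(ω) = ∫ w_γ(t)e^{−iωt}dt vanishing for |ω| ≥ γ. Then i ∫ dt w_γ(t) ∫_0^t du e^{±iu(λ−μ)} = ∓ 1/(λ−μ). -/
open MeasureTheory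

lemma aux_osc (w : ℝ → ℝ) (hw : Integrable w) (hw1 : ∫ t, w t = 1)
    (c : ℂ) (hc : c ≠ 0) (hre : c.re = 0)
    (hF : (∫ t : ℝ, (w t : ℂ) * Complex.exp (c * t)) = 0) :
    Complex.I * (∫ t : ℝ, (w t : ℂ) * ∫ u in (0:ℝ)..t, Complex.exp (c * u))
      = -Complex.I / c := by
  have hinner : ∀ t : ℝ, (∫ u in (0:ℝ)..t, Complex.exp (c * u))
      = (Complex.exp (c * t) - 1) / c := by
    intro t
    rw [integral_exp_mul_complex hc]
    simp
  have hwC : Integrable (fun t : ℝ => (w t : ℂ)) := hw.ofReal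
  have hE : Integrable (fun t : ℝ => (w t : ℂ) * Complex.exp (c * t)) := by
    have := hwC.bdd_mul (f := fun t : ℝ => Complex.exp (c * t))
      (Complex.continuous_exp.comp (by continuity)).aestronglyMeasurable
      (c := 1) (ae_of_all _ fun t => by simp [Complex.norm_exp, mul_comm, Complex.mul_re, hre])
    simpa [mul_comm] using this
  have key : (∫ t : ℝ, (w t : ℂ) * ((Complex.exp (c * t) - 1) / c))
      = ((∫ t : ℝ, (w t : ℂ) * Complex.exp (c * t)) - ∫ t : ℝ, (w t : ℂ)) / c := by
    rw [← integral_sub hE hwC, ← integral_div]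
    congr 1; ext t; ring
  have hwint : (∫ t : ℝ, (w t : ℂ)) = 1 := by
    rw [← Complex.ofReal_one, ← hw1]
    exact integral_ofReal
  simp only [hinner, key, hF, hwint]
  field_simp
  norm_num

/-- The key oscillatory-integral identity of the quasi-adiabatic construction: if
`w_γ ∈ L¹(ℝ)` has `∫ w_γ = 1` and Fourier transform `ŵ_γ(ω) = ∫ w_γ(t) e^{-iωt} dt`
vanishing for `|ω| ≥ γ`, and `|λ − μ| ≥ γ` with `γ > 0`, then
`i ∫ dt w_γ(t) ∫₀ᵗ du e^{± iu(λ−μ)} = ∓ 1/(λ−μ)`. -/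
theorem oscillatory_integral_identity
    (γ lam mu : ℝ) (hγ : 0 < γ) (hgap : γ ≤ |lam - mu|)
    (w : ℝ → ℝ) (hw : Integrable w) (hw1 : ∫ t, w t = 1)
    (hwFourier : ∀ ω : ℝ, γ ≤ |ω| →
      (∫ t : ℝ, (w t : ℂ) * Complex.exp (-(Complex.I * (ω : ℂ) * (t : ℂ)))) = 0) :
    Complex.I * (∫ t : ℝ, (w t : ℂ) *
        ∫ u in (0:ℝ)..t, Complex.exp (Complex.I * (u : ℂ) * ((lam : ℂ) - (mu : ℂ))))
      = -(1 / ((lam : ℂ) - (mu : ℂ))) ∧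
    Complex.I * (∫ t : ℝ, (w t : ℂ) *
        ∫ u in (0:ℝ)..t, Complex.exp (-(Complex.I * (u : ℂ) * ((lam : ℂ) - (mu : ℂ)))))
      = 1 / ((lam : ℂ) - (mu : ℂ)) := by
  set a : ℂ := (lam : ℂ) - (mu : ℂ) with ha
  have hane : lam - mu ≠ 0 := by
    intro h; rw [h] at hgap; simp at hgap; linarith
  have haC : a ≠ 0 := by
    rw [ha]; push_cast [← Complex.ofReal_sub]; exact_mod_cast Complex.ofReal_ne_zero.mpr hane
  have haeq : ((lam - mu : ℝ) : ℂ) = a := by push_cast [ha]; ring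
  constructor
  · have hF : (∫ t : ℝ, (w t : ℂ) * Complex.exp ((Complex.I * a) * t)) = 0 := by
      have := hwFourier (-(lam - mu)) (by rwa [abs_neg])
      rw [← this]
      congr 1; ext t; congr 1; push_cast; rw [ha]; ring_nf
    have h := aux_osc w hw hw1 (Complex.I * a) (by simp [haC, Complex.I_ne_zero])
      (by simp [ha, Complex.mul_re]) hF
    have harg : ∀ u : ℝ, Complex.I * (u:ℂ) * a = (Complex.I * a) * u := fun u => by ring
    simp only [harg]
    rw [h]
    rw [div_mul_eq_div_div_swap, Complex.div_I]
    field_simp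
    simp
  · have hF : (∫ t : ℝ, (w t : ℂ) * Complex.exp ((-(Complex.I * a)) * t)) = 0 := by
      have := hwFourier (lam - mu) hgap
      rw [← this]
      congr 1; ext t; congr 1; rw [haeq]; ring
    have h := aux_osc w hw hw1 (-(Complex.I * a)) (by simp [haC, Complex.I_ne_zero])
      (by simp [ha, Complex.mul_re]) hF
    have harg : ∀ u : ℝ, -(Complex.I * (u:ℂ) * a) = (-(Complex.I * a)) * u := fun u => by ring
    simp only [harg]
    rw [h]
    rw [neg_div_neg_eq, div_mul_eq_div_div_swap, Complex.div_I]
    field_simp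
    simp
end
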